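/- arXiv:2106.08862 — 5 statements merged into one kernel-verified Lean document; each statement's English description precedes it below -/
import Mathlib

section
/- Let ν be a finite Borel measure on (a,b) and f ∈ H¹(a,b). There exists a constant C (depending on a, b, ν but not f) such that ‖f‖_∞ ≤ C(‖∇_Λ f‖²_{L²_Λ(a,b)} + ‖f‖²_{L²_ν})^{1/2}. -/
open MeasureTheory

/-- Cauchy–Schwarz: `∫ |u| ≤ √(μ univ) √(∫ u²)` for `u ∈ L²` of a finite measure. -/
lemma cs_aux {α : Type*} [MeasurableSpace α] (μ : Measure α) [IsFiniteMeasure μ]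
    (u : α → ℝ) (hu : MemLp u 2 μ) :
    ∫ t, |u t| ∂μ ≤ Real.sqrt (μ Set.univ).toReal * Real.sqrt (∫ t, (u t) ^ 2 ∂μ) := by
  have h2 : (ENNReal.ofReal 2) = 2 := by norm_num
  have hpq : Real.HolderConjugate 2 2 := ⟨by norm_num, by norm_num, by norm_num⟩
  have h1 : MemLp (fun _ : α => (1 : ℝ)) (ENNReal.ofReal 2) μ := by
    rw [h2]; exact memLp_const 1
  have hu' : MemLp u (ENNReal.ofReal 2) μ := by rw [h2]; exact hu
  have key := integral_mul_norm_le_Lp_mul_Lq (μ := μ) hpq hu' h1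
  simp only [norm_one, mul_one, Real.norm_eq_abs] at key
  have habs : ∀ t : α, |u t| ^ (2 : ℝ) = (u t) ^ 2 := by
    intro t
    rw [show (2 : ℝ) = ((2 : ℕ) : ℝ) by norm_num, Real.rpow_natCast, sq_abs]
  have hone : ∀ t : α, |(1 : ℝ)| ^ (2 : ℝ) = (1 : ℝ) := by intro t; norm_num
  rw [show (fun a => |u a| ^ (2:ℝ)) = fun a => (u a) ^ 2 from funext habs] at key
  simp only [hone, abs_one, Real.one_rpow, integral_const, smul_eq_mul, mul_one] at key
  calc ∫ t, |u t| ∂μ ≤ (∫ t, (u t) ^ 2 ∂μ) ^ (1/2 : ℝ) * ((μ Set.univ).toReal) ^ (1/2 : ℝ) :=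
        key
    _ = Real.sqrt (μ Set.univ).toReal * Real.sqrt (∫ t, (u t) ^ 2 ∂μ) := by
        rw [← Real.sqrt_eq_rpow, ← Real.sqrt_eq_rpow, mul_comm]

/-- Sobolev-type sup-norm bound: there is a constant `C` (depending on `a`, `b`, `ν`
but not on `f`) such that every `f ∈ H¹(a,b)` with weak derivative `g` satisfies
`‖f‖_∞ ≤ C (‖g‖²_{L²_Λ} + ‖f‖²_{L²_ν})^{1/2}`. -/
theorem stmt1 (a b : ℝ) (hab : a < b) (ν : Measure ℝ) [IsFiniteMeasure ν]
    (hν : ν (Set.Ioo a b) ≠ 0) :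
    ∃ C : ℝ, ∀ f g : ℝ → ℝ,
      MemLp g 2 (volume.restrict (Set.Icc a b)) →
      (∀ x ∈ Set.Icc a b, f x = f a + ∫ t in Set.Icc a x, g t) →
      ∀ x ∈ Set.Icc a b,
        |f x| ≤ C * Real.sqrt ((∫ t in Set.Ioo a b, (g t) ^ 2) +
          ∫ t in Set.Ioo a b, (f t) ^ 2 ∂ν) := by
  set M : ℝ := (ν (Set.Ioo a b)).toReal with hMdef
  have hMpos : 0 < M := ENNReal.toReal_pos hν (measure_ne_top ν _)
  refine ⟨(Real.sqrt M)⁻¹ + 2 * Real.sqrt (b - a), ?_⟩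
  intro f g hg hf x hx
  haveI : IsFiniteMeasure (volume.restrict (Set.Icc a b)) := by
    constructor
    rw [Measure.restrict_apply_univ, Real.volume_Icc]
    exact ENNReal.ofReal_lt_top
  set I1 : ℝ := ∫ t in Set.Ioo a b, (g t) ^ 2 with hI1def
  set I2 : ℝ := ∫ t in Set.Ioo a b, (f t) ^ 2 ∂ν with hI2def
  have hI1nn : 0 ≤ I1 := integral_nonneg fun t => sq_nonneg _
  have hI2nn : 0 ≤ I2 := integral_nonneg fun t => sq_nonneg _
  have hgint : Integrable g (volume.restrict (Set.Icc a b)) :=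
    hg.integrable one_le_two
  -- the primitive F is continuous on [a,b]
  set F : ℝ → ℝ := fun y => f a + ∫ t in Set.Icc a y, g t with hFdef
  have hFcont : ContinuousOn F (Set.Icc a b) :=
    continuousOn_const.add (intervalIntegral.continuousOn_primitive_Icc hgint)
  -- step A : |f x - f y| ≤ 2K
  set K : ℝ := ∫ t in Set.Icc a b, |g t| with hKdef
  have habs : Integrable (fun t => |g t|) (volume.restrict (Set.Icc a b)) := hgint.abs
  have hsub : ∀ z ∈ Set.Icc a b, |∫ t in Set.Icc a z, g t| ≤ K := by
    intro z hz
    calc |∫ t in Set.Icc a z, g t| ≤ ∫ t in Set.Icc a z, |g t| := by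
          simpa [Real.norm_eq_abs] using
            norm_integral_le_integral_norm (μ := volume.restrict (Set.Icc a z)) g
      _ ≤ K := by
          refine setIntegral_mono_set habs
            (Filter.Eventually.of_forall fun t => abs_nonneg _) ?_
          exact Filter.Eventually.of_forall fun t ht => Set.Icc_subset_Icc_right hz.2 ht
  have hA : ∀ y ∈ Set.Icc a b, |f x| ≤ |f y| + 2 * K := by
    intro y hy
    have h1 := hsub x hx
    have h2 := hsub y hy
    have hfx := hf x hx
    have hfy := hf y hy
    have : |f x - f y| ≤ 2 * K := by
      rw [hfx, hfy]
      have : f a + (∫ t in Set.Icc a x, g t) - (f a + ∫ t in Set.Icc a y, g t)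
          = (∫ t in Set.Icc a x, g t) - ∫ t in Set.Icc a y, g t := by ring
      rw [this]
      calc |(∫ t in Set.Icc a x, g t) - ∫ t in Set.Icc a y, g t|
          ≤ |∫ t in Set.Icc a x, g t| + |∫ t in Set.Icc a y, g t| := abs_sub _ _
        _ ≤ 2 * K := by linarith
    calc |f x| ≤ |f y| + |f x - f y| := by
          have := abs_sub_abs_le_abs_sub (f x) (f y); linarith
      _ ≤ |f y| + 2 * K := by linarith
  -- Hölder for K
  have hK2 : K ≤ Real.sqrt (b - a) * Real.sqrt I1 := by
    have := cs_aux (volume.restrict (Set.Icc a b)) g hg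
    have hvol : ((volume.restrict (Set.Icc a b)) Set.univ).toReal = b - a := by
      rw [Measure.restrict_apply_univ, Real.volume_Icc, ENNReal.toReal_ofReal (by linarith)]
    have hIcc : (∫ t in Set.Icc a b, (g t) ^ 2) = I1 := by
      rw [hI1def, MeasureTheory.integral_Icc_eq_integral_Ioc,
        MeasureTheory.integral_Ioc_eq_integral_Ioo]
    rw [hvol, hIcc] at this
    exact this
  -- f agrees with F on (a,b), is measurable and bounded there
  have hfF : ∀ y ∈ Set.Ioo a b, f y = F y := fun y hy => hf y (Set.Ioo_subset_Icc_self hy)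
  have hmeas : AEStronglyMeasurable f (ν.restrict (Set.Ioo a b)) := by
    have h1 : AEStronglyMeasurable F (ν.restrict (Set.Ioo a b)) :=
      (hFcont.mono Set.Ioo_subset_Icc_self).aestronglyMeasurable measurableSet_Ioo
    refine h1.congr ?_
    filter_upwards [ae_restrict_mem measurableSet_Ioo] with y hy
    exact (hfF y hy).symm
  obtain ⟨B, hB⟩ := isCompact_Icc.exists_bound_of_continuousOn hFcont
  have hfB : ∀ᵐ y ∂(ν.restrict (Set.Ioo a b)), ‖f y‖ ≤ B := by
    filter_upwards [ae_restrict_mem measurableSet_Ioo] with y hy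
    rw [hfF y hy]
    exact hB y (Set.Ioo_subset_Icc_self hy)
  have hfL2 : MemLp f 2 (ν.restrict (Set.Ioo a b)) := MemLp.of_bound hmeas B hfB
  have hfint : Integrable f (ν.restrict (Set.Ioo a b)) := hfL2.integrable one_le_two
  -- Hölder for ∫ |f| dν
  have hf2 : ∫ y in Set.Ioo a b, |f y| ∂ν ≤ Real.sqrt M * Real.sqrt I2 := by
    have := cs_aux (ν.restrict (Set.Ioo a b)) f hfL2
    rwa [Measure.restrict_apply_univ] at this
  -- averaging
  have havg : |f x| * M ≤ (∫ y in Set.Ioo a b, |f y| ∂ν) + 2 * K * M := by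
    have hmono : (∫ y in Set.Ioo a b, |f x| ∂ν) ≤ ∫ y in Set.Ioo a b, (|f y| + 2 * K) ∂ν := by
      refine integral_mono_ae (integrable_const _) (hfint.abs.add (integrable_const _)) ?_
      filter_upwards [ae_restrict_mem measurableSet_Ioo] with y hy
      exact hA y (Set.Ioo_subset_Icc_self hy)
    rw [setIntegral_const, smul_eq_mul, mul_comm] at hmono
    rw [integral_add hfint.abs (integrable_const _), setIntegral_const, smul_eq_mul,
      mul_comm (ν.real (Set.Ioo a b)) (2 * K)] at hmono
    exact hmono
  -- putting things together
  have hMsqrt : Real.sqrt M * Real.sqrt M = M := Real.mul_self_sqrt hMpos.le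
  have hMs_pos : 0 < Real.sqrt M := Real.sqrt_pos.mpr hMpos
  have hstep : |f x| ≤ (Real.sqrt M)⁻¹ * Real.sqrt I2 + 2 * Real.sqrt (b - a) * Real.sqrt I1 := by
    have h1 : |f x| ≤ (∫ y in Set.Ioo a b, |f y| ∂ν) / M + 2 * K := by
      rw [div_add' _ _ _ hMpos.ne', le_div_iff₀ hMpos]
      linarith
    have h2 : (∫ y in Set.Ioo a b, |f y| ∂ν) / M ≤ (Real.sqrt M)⁻¹ * Real.sqrt I2 := by
      rw [div_le_iff₀ hMpos]
      calc (∫ y in Set.Ioo a b, |f y| ∂ν) ≤ Real.sqrt M * Real.sqrt I2 := hf2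
        _ = (Real.sqrt M)⁻¹ * Real.sqrt I2 * M := by
            field_simp
            nlinarith [Real.sqrt_nonneg I2]
    have h3 : 2 * K ≤ 2 * Real.sqrt (b - a) * Real.sqrt I1 := by
      rw [mul_assoc]; linarith
    linarith
  have hle1 : Real.sqrt I1 ≤ Real.sqrt (I1 + I2) := Real.sqrt_le_sqrt (by linarith)
  have hle2 : Real.sqrt I2 ≤ Real.sqrt (I1 + I2) := Real.sqrt_le_sqrt (by linarith)
  calc |f x| ≤ (Real.sqrt M)⁻¹ * Real.sqrt I2 + 2 * Real.sqrt (b - a) * Real.sqrt I1 := hstep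
    _ ≤ (Real.sqrt M)⁻¹ * Real.sqrt (I1 + I2)
        + 2 * Real.sqrt (b - a) * Real.sqrt (I1 + I2) := by
        gcongr <;> positivity
    _ = ((Real.sqrt M)⁻¹ + 2 * Real.sqrt (b - a)) * Real.sqrt (I1 + I2) := by ring
end

section
/- Let ν be a finite Borel measure on a compact interval [a,b] and define γ_n = inf over ν-partitions Ξ of (a,b] into at most n half-open intervals (with no ν-atoms at endpoints) of max_{I∈Ξ} Λ(I)ν(I). Then for all n ∈ ℕ, γ_{2^{n+1}} ≤ (1/2)·γ_{2^n}. -/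
open MeasureTheory

/-- `gammaN ν a b n` is the infimum over ν-partitions of `(a,b]` into at most `n`
half-open intervals (with no ν-atoms at the endpoints) of the maximal value of
`Λ(I)·ν(I)` over the intervals `I` of the partition. -/
noncomputable def gammaN (ν : Measure ℝ) (a b : ℝ) (n : ℕ) : ℝ :=
  sInf { x : ℝ | ∃ m : ℕ, ∃ c : ℕ → ℝ, 1 ≤ m ∧ m ≤ n ∧ c 0 = a ∧ c m = b ∧
    (∀ k < m, c k < c (k + 1)) ∧ (∀ k ≤ m, ν {c k} = 0) ∧
    x = sSup { y : ℝ | ∃ k < m,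
      y = (volume (Set.Ioc (c k) (c (k + 1)))).toReal *
        (ν (Set.Ioc (c k) (c (k + 1)))).toReal } }

/- Auxiliary lemmas -/

lemma aux_exists_nonatom (ν : Measure ℝ) [IsFiniteMeasure ν] {u v : ℝ} (huv : u < v) :
    ∃ d, u < d ∧ d < v ∧ ν {d} = 0 := by
  have hcnt : Set.Countable {t : ℝ | 0 < ν {a : ℝ | a = t}} :=
    Measure.countable_meas_level_set_pos measurable_id
  have hcnt' : Set.Countable {t : ℝ | ν {t} ≠ 0} := by
    refine hcnt.mono ?_
    intro t ht
    simp only [Set.mem_setOf_eq] at ht ⊢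
    have h1 : {a : ℝ | a = t} = {t} := by ext; simp
    rw [h1]
    exact pos_iff_ne_zero.mpr ht
  by_contra h
  push_neg at h
  have hsub : Set.Ioo u v ⊆ {t : ℝ | ν {t} ≠ 0} := fun t ht => h t ht.1 ht.2
  have hioo : (Set.Ioo u v).Countable := hcnt'.mono hsub
  have hle : Cardinal.mk (Set.Ioo u v) ≤ Cardinal.aleph0 := hioo.le_aleph0
  rw [Cardinal.mk_Ioo_real huv] at hle
  exact absurd hle (not_le.mpr Cardinal.aleph0_lt_continuum)

lemma aux_split (ν : Measure ℝ) [IsFiniteMeasure ν] {u v δ : ℝ} (huv : u < v) (hδ : 0 < δ) :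
    ∃ d, u < d ∧ d < v ∧ ν {d} = 0 ∧ d - u ≤ (v - u) / 2 + δ ∧ v - d ≤ (v - u) / 2 := by
  set mid := (u + v) / 2 with hmid
  have h1 : mid < min (mid + δ) v := lt_min (by linarith) (by simp only [hmid]; linarith)
  obtain ⟨d, hd1, hd2, hd3⟩ := aux_exists_nonatom ν h1
  have hd2' : d < mid + δ := lt_of_lt_of_le hd2 (min_le_left _ _)
  have hd2'' : d < v := lt_of_lt_of_le hd2 (min_le_right _ _)
  exact ⟨d, by simp only [hmid] at hd1; linarith, hd2'', hd3,
    by simp only [hmid] at hd2'; linarith, by simp only [hmid] at hd1; linarith⟩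

lemma aux_bddAbove (f : ℕ → ℝ) (m : ℕ) : BddAbove {y | ∃ k < m, y = f k} := by
  have hfin : {y | ∃ k < m, y = f k}.Finite := by
    refine ((Set.finite_Iio m).image f).subset ?_
    rintro y ⟨k, hk, rfl⟩
    exact ⟨k, hk, rfl⟩
  exact hfin.bddAbove

lemma aux_le_sSup (f : ℕ → ℝ) (m k : ℕ) (hk : k < m) :
    f k ≤ sSup {y | ∃ k < m, y = f k} :=
  le_csSup (aux_bddAbove f m) ⟨k, hk, rfl⟩

lemma aux_sSup_le (f : ℕ → ℝ) (m : ℕ) (hm : 1 ≤ m) (B : ℝ) (h : ∀ k < m, f k ≤ B) :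
    sSup {y | ∃ k < m, y = f k} ≤ B := by
  refine csSup_le ⟨f 0, 0, hm, rfl⟩ ?_
  rintro y ⟨k, hk, rfl⟩
  exact h k hk

/-- The main workhorse: doubling the number of intervals halves γ. -/
lemma gammaN_le_half (ν : Measure ℝ) [IsFiniteMeasure ν] (a b : ℝ) (hab : a < b) (N : ℕ)
    (hN : 1 ≤ N) : gammaN ν a b (2 * N) ≤ (1 / 2) * gammaN ν a b N := by
  set S : ℕ → Set ℝ := fun n => { x : ℝ | ∃ m : ℕ, ∃ c : ℕ → ℝ, 1 ≤ m ∧ m ≤ n ∧ c 0 = a ∧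
    c m = b ∧ (∀ k < m, c k < c (k + 1)) ∧ (∀ k ≤ m, ν {c k} = 0) ∧
    x = sSup { y : ℝ | ∃ k < m,
      y = (volume (Set.Ioc (c k) (c (k + 1)))).toReal *
        (ν (Set.Ioc (c k) (c (k + 1)))).toReal } } with hS
  have hgamma : ∀ n, gammaN ν a b n = sInf (S n) := fun n => rfl
  -- every element of every S n is nonnegative
  have hnonneg : ∀ n, ∀ x ∈ S n, 0 ≤ x := by
    rintro n x ⟨m, c, hm1, _, _, _, _, _, rfl⟩
    have h0 : (volume (Set.Ioc (c 0) (c (0 + 1)))).toReal *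
        (ν (Set.Ioc (c 0) (c (0 + 1)))).toReal ∈ { y : ℝ | ∃ k < m,
      y = (volume (Set.Ioc (c k) (c (k + 1)))).toReal *
        (ν (Set.Ioc (c k) (c (k + 1)))).toReal } := ⟨0, hm1, rfl⟩
    exact le_trans (mul_nonneg ENNReal.toReal_nonneg ENNReal.toReal_nonneg)
      (le_csSup (aux_bddAbove _ m) h0)
  have hbdd : ∀ n, BddBelow (S n) := fun n => ⟨0, fun x hx => hnonneg n x hx⟩
  by_cases hA : ν {a} = 0 ∧ ν {b} = 0
  · -- nonempty case
    have hSne : (S N).Nonempty := by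
      refine ⟨_, 1, fun k => if k = 0 then a else b, le_refl 1, hN, by simp, by simp, ?_, ?_, rfl⟩
      · intro k hk
        interval_cases k
        simpa using hab
      · intro k hk
        interval_cases k
        · simpa using hA.1
        · simpa using hA.2
    -- main claim
    have key : ∀ x ∈ S N, sInf (S (2 * N)) ≤ x / 2 := by
      intro x hx
      refine le_of_forall_pos_le_add ?_
      intro ε hε
      set C : ℝ := (ν Set.univ).toReal with hC
      have hC0 : 0 ≤ C := ENNReal.toReal_nonneg
      set δ : ℝ := ε / (C + 1) with hδdef
      have hδ : 0 < δ := div_pos hε (by linarith)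
      obtain ⟨m, c, hm1, hm2, hc0, hcm, hmono, hatom, hxeq⟩ := hx
      -- choose split points
      have hex : ∀ k, ∃ s, k < m → (c k < s ∧ s < c (k + 1) ∧ ν {s} = 0 ∧
          s - c k ≤ (c (k + 1) - c k) / 2 + δ ∧ c (k + 1) - s ≤ (c (k + 1) - c k) / 2) := by
        intro k
        by_cases hk : k < m
        · obtain ⟨d, hd⟩ := aux_split ν (hmono k hk) hδ
          exact ⟨d, fun _ => hd⟩
        · exact ⟨0, fun h => absurd h hk⟩
      choose s hs using hex
      set d : ℕ → ℝ := fun j => if j % 2 = 0 then c (j / 2) else s (j / 2) with hd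
      have hd_even : ∀ k, d (2 * k) = c k := by
        intro k
        have h1 : (2 * k) % 2 = 0 := by omega
        have h2 : (2 * k) / 2 = k := by omega
        simp [hd, h1, h2]
      have hd_odd : ∀ k, d (2 * k + 1) = s k := by
        intro k
        have h1 : (2 * k + 1) % 2 = 1 := by omega
        have h2 : (2 * k + 1) / 2 = k := by omega
        simp [hd, h1, h2]
      have hmono' : ∀ j < 2 * m, d j < d (j + 1) := by
        intro j hj
        rcases Nat.even_or_odd j with ⟨k, hk⟩ | ⟨k, hk⟩
        · have hkm : k < m := by omega
          have e1 : d j = c k := by rw [hk, ← two_mul]; exact hd_even k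
          have e2 : d (j + 1) = s k := by rw [hk, ← two_mul]; exact hd_odd k
          rw [e1, e2]; exact (hs k hkm).1
        · have hkm : k < m := by omega
          have e1 : d j = s k := by rw [hk]; exact hd_odd k
          have e2 : d (j + 1) = c (k + 1) := by
            have hjj : j + 1 = 2 * (k + 1) := by omega
            rw [hjj]; exact hd_even (k + 1)
          rw [e1, e2]; exact (hs k hkm).2.1
      have hatom' : ∀ j ≤ 2 * m, ν {d j} = 0 := by
        intro j hj
        rcases Nat.even_or_odd j with ⟨k, hk⟩ | ⟨k, hk⟩
        · have e1 : d j = c k := by rw [hk, ← two_mul]; exact hd_even k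
          rw [e1]; exact hatom k (by omega)
        · have hkm : k < m := by omega
          have e1 : d j = s k := by rw [hk]; exact hd_odd k
          rw [e1]; exact (hs k hkm).2.2.1
      have hd0 : d 0 = a := by
        have h00 : (0 : ℕ) = 2 * 0 := by omega
        rw [h00, hd_even]; exact hc0
      have hdm : d (2 * m) = b := by rw [hd_even]; exact hcm
      have hmem : sSup { y : ℝ | ∃ j < 2 * m,
          y = (volume (Set.Ioc (d j) (d (j + 1)))).toReal *
            (ν (Set.Ioc (d j) (d (j + 1)))).toReal } ∈ S (2 * N) :=
        ⟨2 * m, d, by omega, by omega, hd0, hdm, hmono', hatom', rfl⟩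
      -- bound the sup
      have hbase : ∀ k, k < m → (volume (Set.Ioc (c k) (c (k + 1)))).toReal *
          (ν (Set.Ioc (c k) (c (k + 1)))).toReal ≤ x := by
        intro k hk
        rw [hxeq]
        exact le_csSup (aux_bddAbove _ m) ⟨k, hk, rfl⟩
      have hMk : ∀ u v : ℝ, (ν (Set.Ioc u v)).toReal ≤ C :=
        fun u v => ENNReal.toReal_mono (measure_ne_top ν _) (measure_mono (Set.subset_univ _))
      have hsupbd : sSup { y : ℝ | ∃ j < 2 * m,
          y = (volume (Set.Ioc (d j) (d (j + 1)))).toReal *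
            (ν (Set.Ioc (d j) (d (j + 1)))).toReal } ≤ x / 2 + ε := by
        refine csSup_le ⟨_, 0, by omega, rfl⟩ ?_
        rintro y ⟨j, hj, rfl⟩
        rcases Nat.even_or_odd j with ⟨k, hk⟩ | ⟨k, hk⟩
        · -- left half: (c k, s k]
          have hkm : k < m := by omega
          obtain ⟨h1, h2, _, h4, _⟩ := hs k hkm
          have e1 : d j = c k := by rw [hk, ← two_mul]; exact hd_even k
          have e2 : d (j + 1) = s k := by rw [hk, ← two_mul]; exact hd_odd k
          rw [e1, e2, Real.volume_Ioc, ENNReal.toReal_ofReal (by linarith)]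
          have hmeas : (ν (Set.Ioc (c k) (s k))).toReal ≤
              (ν (Set.Ioc (c k) (c (k + 1)))).toReal :=
            ENNReal.toReal_mono (measure_ne_top ν _)
              (measure_mono (Set.Ioc_subset_Ioc le_rfl (le_of_lt h2)))
          have hLM : (c (k + 1) - c k) * (ν (Set.Ioc (c k) (c (k + 1)))).toReal ≤ x := by
            have h := hbase k hkm
            rwa [Real.volume_Ioc, ENNReal.toReal_ofReal (by linarith)] at h
          have hδC : δ * (ν (Set.Ioc (c k) (c (k + 1)))).toReal ≤ ε := by
            have h5 : δ * (ν (Set.Ioc (c k) (c (k + 1)))).toReal ≤ δ * C :=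
              mul_le_mul_of_nonneg_left (hMk _ _) hδ.le
            have h6 : δ * C ≤ δ * (C + 1) := by nlinarith
            have h7 : δ * (C + 1) = ε := by rw [hδdef]; field_simp
            linarith
          have hprod : (s k - c k) * (ν (Set.Ioc (c k) (s k))).toReal ≤
              ((c (k + 1) - c k) / 2 + δ) * (ν (Set.Ioc (c k) (c (k + 1)))).toReal :=
            mul_le_mul h4 hmeas ENNReal.toReal_nonneg (by linarith)
          linarith [hprod, hLM, hδC]
        · -- right half: (s k, c (k+1)]
          have hkm : k < m := by omega
          obtain ⟨h1, h2, _, _, h5⟩ := hs k hkm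
          have e1 : d j = s k := by rw [hk]; exact hd_odd k
          have e2 : d (j + 1) = c (k + 1) := by
            have hjj : j + 1 = 2 * (k + 1) := by omega
            rw [hjj]; exact hd_even (k + 1)
          rw [e1, e2, Real.volume_Ioc, ENNReal.toReal_ofReal (by linarith)]
          have hmeas : (ν (Set.Ioc (s k) (c (k + 1)))).toReal ≤
              (ν (Set.Ioc (c k) (c (k + 1)))).toReal :=
            ENNReal.toReal_mono (measure_ne_top ν _)
              (measure_mono (Set.Ioc_subset_Ioc (le_of_lt h1) le_rfl))
          have hLM : (c (k + 1) - c k) * (ν (Set.Ioc (c k) (c (k + 1)))).toReal ≤ x := by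
            have h := hbase k hkm
            rwa [Real.volume_Ioc, ENNReal.toReal_ofReal (by linarith)] at h
          have hprod : (c (k + 1) - s k) * (ν (Set.Ioc (s k) (c (k + 1)))).toReal ≤
              ((c (k + 1) - c k) / 2) * (ν (Set.Ioc (c k) (c (k + 1)))).toReal :=
            mul_le_mul h5 hmeas ENNReal.toReal_nonneg (by linarith)
          linarith [hprod, hLM, hε.le]
      calc sInf (S (2 * N)) ≤ _ := csInf_le (hbdd (2 * N)) hmem
        _ ≤ x / 2 + ε := hsupbd
    -- conclude
    rw [hgamma, hgamma]
    have h2 : 2 * sInf (S (2 * N)) ≤ sInf (S N) := by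
      refine le_csInf hSne ?_
      intro x hx
      have := key x hx
      linarith
    linarith
  · -- degenerate case: both sets are empty
    have hempty : ∀ n, S n = ∅ := by
      intro n
      ext x
      simp only [hS, Set.mem_empty_iff_false, iff_false, Set.mem_setOf_eq]
      rintro ⟨m, c, hm1, _, hc0, hcm, _, hatom, _⟩
      exact hA ⟨hc0 ▸ hatom 0 (Nat.zero_le m), hcm ▸ hatom m le_rfl⟩
    rw [hgamma, hgamma, hempty, hempty, Real.sInf_empty]
    norm_num

/-- Halving the maximal product by doubling the number of partition intervals:
`γ_{2^{n+1}} ≤ (1/2)·γ_{2^n}`. -/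
theorem stmt2 (ν : Measure ℝ) [IsFiniteMeasure ν] (a b : ℝ) (hab : a < b) (n : ℕ) :
    gammaN ν a b (2 ^ (n + 1)) ≤ (1 / 2) * gammaN ν a b (2 ^ n) := by
  have h := gammaN_le_half ν a b hab (2 ^ n) Nat.one_le_two_pow
  rwa [show 2 * 2 ^ n = 2 ^ (n + 1) by ring] at h
end

section
/- Let ν be a Borel probability measure on (0,1] with L^q-spectrum β_ν, and suppose q̄ := inf{q > 0 : β_ν(q) − q ≤ 0} > 0. Then q̄ ∈ (0,1), q̄ is the unique fixed point of β_ν on (0,1), i.e. β_ν(q̄) = q̄, and q̄ = inf{q > 0 : Σ_{C ∈ D_ν} (ν(C)Λ(C))^q < ∞}, where D_ν = ∪_n D_{ν,n}. -/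
open MeasureTheory
open scoped Classical

/-- The dyadic interval `A_k^n = (k·2^{-n}, (k+1)·2^{-n}]`. -/
def dyadic (n k : ℕ) : Set ℝ := Set.Ioc ((k : ℝ) / 2 ^ n) (((k : ℝ) + 1) / 2 ^ n)

/-- `betan ν n q = (1/(n log 2)) log Σ_{C ∈ D_{ν,n}} ν(C)^q`, the `n`-th approximation
of the `L^q`-spectrum, where `D_{ν,n}` is the set of dyadic intervals of generation `n`
with positive `ν`-measure. -/
noncomputable def betan (ν : Measure ℝ) (n : ℕ) (q : ℝ) : ℝ :=
  (1 / ((n : ℝ) * Real.log 2)) *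
    Real.log (∑ k ∈ (Finset.range (2 ^ n)).filter (fun k => ν (dyadic n k) ≠ 0),
      ((ν (dyadic n k)).toReal) ^ q)

/-- The `L^q`-spectrum `β_ν(q) = limsup_n betan ν n q`. -/
noncomputable def lqSpectrum (ν : Measure ℝ) (q : ℝ) : ℝ :=
  Filter.atTop.limsup (fun n => betan ν n q)

namespace Stmt8Aux

open Filter Finset Real

variable (ν : Measure ℝ)

/-- abbreviation for the generation-`n` dyadic family with positive measure -/
noncomputable def Dn (n : ℕ) : Finset ℕ :=
  (Finset.range (2 ^ n)).filter (fun k => ν (dyadic n k) ≠ 0)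

/-- the partition sum -/
noncomputable def S (n : ℕ) (q : ℝ) : ℝ :=
  ∑ k ∈ Dn ν n, ((ν (dyadic n k)).toReal) ^ q

lemma betan_eq (n : ℕ) (q : ℝ) :
    betan ν n q = (1 / ((n : ℝ) * Real.log 2)) * Real.log (S ν n q) := rfl

lemma sum_range_measure [IsProbabilityMeasure ν] (hν : ν (Set.Ioc 0 1) = 1) (n : ℕ) :
    ∑ k ∈ Finset.range (2 ^ n), ν (dyadic n k) = 1 := by
  have key : ∀ m : ℕ, ∑ k ∈ Finset.range m, ν (dyadic n k)
      = ν (Set.Ioc 0 ((m : ℝ) / 2 ^ n)) := by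
    intro m
    induction m with
    | zero => simp
    | succ m ih =>
      rw [Finset.sum_range_succ, ih]
      have h1 : (0:ℝ) ≤ (m : ℝ) / 2 ^ n := by positivity
      have h2 : (m : ℝ) / 2 ^ n ≤ ((m : ℝ) + 1) / 2 ^ n := by
        apply div_le_div_of_nonneg_right ?_ (by positivity)
        · linarith
      rw [show dyadic n m = Set.Ioc ((m:ℝ)/2^n) (((m:ℝ)+1)/2^n) from rfl]
      rw [← measure_union (Set.Ioc_disjoint_Ioc_of_le le_rfl) measurableSet_Ioc,
        Set.Ioc_union_Ioc_eq_Ioc h1 h2]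
      norm_num
  rw [key (2 ^ n)]
  have : ((2 ^ n : ℕ) : ℝ) / 2 ^ n = 1 := by
    rw [div_eq_one_iff_eq (by positivity)]
    push_cast; ring
  rw [this, hν]

variable [IsProbabilityMeasure ν]

lemma r_pos {n k : ℕ} (hk : k ∈ Dn ν n) : 0 < (ν (dyadic n k)).toReal := by
  have hk' : ν (dyadic n k) ≠ 0 := (Finset.mem_filter.1 hk).2
  exact ENNReal.toReal_pos hk' (measure_ne_top ν _)

lemma r_le_one (n k : ℕ) : (ν (dyadic n k)).toReal ≤ 1 := by
  have := ENNReal.toReal_mono (by simp : (1:ENNReal) ≠ ⊤) (prob_le_one (μ := ν) (s := dyadic n k))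
  simpa using this

lemma sum_r (hν : ν (Set.Ioc 0 1) = 1) (n : ℕ) :
    ∑ k ∈ Finset.range (2 ^ n), (ν (dyadic n k)).toReal = 1 := by
  rw [← ENNReal.toReal_sum (fun a _ => measure_ne_top ν _), sum_range_measure ν hν n]
  simp

/-- pigeonhole: some dyadic interval has mass at least `2⁻ⁿ` -/
lemma exists_big (hν : ν (Set.Ioc 0 1) = 1) (n : ℕ) :
    ∃ k ∈ Dn ν n, ((2:ℝ) ^ n)⁻¹ ≤ (ν (dyadic n k)).toReal := by
  have hne : (Finset.range (2 ^ n)).Nonempty := by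
    simp [Finset.nonempty_range_iff]
  have hsum : ∑ _k ∈ Finset.range (2 ^ n), ((2:ℝ) ^ n)⁻¹
      ≤ ∑ k ∈ Finset.range (2 ^ n), (ν (dyadic n k)).toReal := by
    rw [sum_r ν hν n, Finset.sum_const, Finset.card_range, nsmul_eq_mul]
    rw [show ((2^n : ℕ) : ℝ) = (2:ℝ)^n by push_cast; ring]
    rw [mul_inv_cancel₀ (by positivity)]
  obtain ⟨k, hk, hle⟩ := Finset.exists_le_of_sum_le hne hsum
  refine ⟨k, Finset.mem_filter.2 ⟨hk, ?_⟩, hle⟩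
  intro h0
  rw [h0, ENNReal.toReal_zero] at hle
  have : (0:ℝ) < ((2:ℝ)^n)⁻¹ := by positivity
  linarith

lemma Dn_nonempty (hν : ν (Set.Ioc 0 1) = 1) (n : ℕ) : (Dn ν n).Nonempty := by
  obtain ⟨k, hk, -⟩ := exists_big ν hν n; exact ⟨k, hk⟩

lemma S_pos (hν : ν (Set.Ioc 0 1) = 1) (n : ℕ) (q : ℝ) : 0 < S ν n q := by
  obtain ⟨k, hk⟩ := Dn_nonempty ν hν n
  refine Finset.sum_pos' (fun i hi => ?_) ⟨k, hk, ?_⟩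
  · exact Real.rpow_nonneg ENNReal.toReal_nonneg q
  · exact Real.rpow_pos_of_pos (r_pos ν hk) q

lemma S_one (hν : ν (Set.Ioc 0 1) = 1) (n : ℕ) : S ν n 1 = 1 := by
  have h1 : S ν n 1 = ∑ k ∈ Finset.range (2^n), (ν (dyadic n k)).toReal := by
    unfold S Dn
    rw [Finset.sum_filter]
    apply Finset.sum_congr rfl
    intro k _
    by_cases h : ν (dyadic n k) = 0 <;> simp [h]
  rw [h1, sum_r ν hν n]

lemma S_le (n : ℕ) {q : ℝ} (hq : 0 ≤ q) : S ν n q ≤ 2 ^ n := by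
  calc S ν n q ≤ ∑ _k ∈ Dn ν n, (1:ℝ) := by
        refine Finset.sum_le_sum fun k hk => ?_
        exact Real.rpow_le_one ENNReal.toReal_nonneg (r_le_one ν n k) hq
    _ = (Dn ν n).card := by simp
    _ ≤ (Finset.range (2^n)).card := by
        have h2 : Dn ν n ⊆ Finset.range (2^n) := Finset.filter_subset _ _
        exact_mod_cast Finset.card_le_card h2
    _ = 2 ^ n := by simp

lemma S_ge (hν : ν (Set.Ioc 0 1) = 1) (n : ℕ) {q : ℝ} (hq : 0 ≤ q) :
    (((2:ℝ) ^ n)⁻¹) ^ q ≤ S ν n q := by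
  obtain ⟨k, hk, hle⟩ := exists_big ν hν n
  calc (((2:ℝ) ^ n)⁻¹) ^ q ≤ ((ν (dyadic n k)).toReal) ^ q :=
        Real.rpow_le_rpow (by positivity) hle hq
    _ ≤ S ν n q :=
        Finset.single_le_sum (f := fun i => ((ν (dyadic n i)).toReal) ^ q)
          (fun i _ => Real.rpow_nonneg ENNReal.toReal_nonneg q) hk

lemma S_anti (n : ℕ) {q q' : ℝ} (h : q' ≤ q) : S ν n q ≤ S ν n q' := by
  refine Finset.sum_le_sum fun k hk => ?_
  exact Real.rpow_le_rpow_of_exponent_ge (r_pos ν hk) (r_le_one ν n k) h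

omit [IsProbabilityMeasure ν] in
lemma betan_zero' (q : ℝ) : betan ν 0 q = 0 := by
  simp [betan]

lemma betan_le_one (hν : ν (Set.Ioc 0 1) = 1) (n : ℕ) {q : ℝ} (hq : 0 ≤ q) :
    betan ν n q ≤ 1 := by
  rcases Nat.eq_zero_or_pos n with rfl | hn
  · rw [betan_zero']; norm_num
  · have hc : (0:ℝ) < (n : ℝ) * Real.log 2 := by
      have := Real.log_pos (by norm_num : (1:ℝ) < 2)
      have : (0:ℝ) < n := by exact_mod_cast hn
      positivity
    have hS : Real.log (S ν n q) ≤ (n:ℝ) * Real.log 2 := by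
      calc Real.log (S ν n q) ≤ Real.log (2^n) :=
            Real.log_le_log (S_pos ν hν n q) (S_le ν n hq)
        _ = (n:ℝ) * Real.log 2 := by rw [Real.log_pow]
    rw [betan_eq, one_div]
    have h2 := mul_le_mul_of_nonneg_left hS (le_of_lt (inv_pos.2 hc))
    rw [inv_mul_cancel₀ hc.ne'] at h2
    exact h2

lemma neg_le_betan (hν : ν (Set.Ioc 0 1) = 1) (n : ℕ) {q : ℝ} (hq : 0 ≤ q) :
    -q ≤ betan ν n q := by
  rcases Nat.eq_zero_or_pos n with rfl | hn
  · rw [betan_zero']; linarith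
  · have hc : (0:ℝ) < (n : ℝ) * Real.log 2 := by
      have := Real.log_pos (by norm_num : (1:ℝ) < 2)
      have : (0:ℝ) < n := by exact_mod_cast hn
      positivity
    have hS : -q * ((n:ℝ) * Real.log 2) ≤ Real.log (S ν n q) := by
      calc -q * ((n:ℝ) * Real.log 2) = Real.log ((((2:ℝ)^n)⁻¹) ^ q) := by
            rw [Real.log_rpow (by positivity), Real.log_inv, Real.log_pow]; ring
        _ ≤ Real.log (S ν n q) :=
            Real.log_le_log (by positivity) (S_ge ν hν n hq)
    rw [betan_eq, one_div]
    have h2 := mul_le_mul_of_nonneg_left hS (le_of_lt (inv_pos.2 hc))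
    calc -q = ((n:ℝ) * Real.log 2)⁻¹ * (-q * ((n:ℝ) * Real.log 2)) := by
          field_simp
      _ ≤ ((n:ℝ) * Real.log 2)⁻¹ * Real.log (S ν n q) := h2

lemma betan_anti (hν : ν (Set.Ioc 0 1) = 1) (n : ℕ) {q q' : ℝ} (h : q' ≤ q) :
    betan ν n q ≤ betan ν n q' := by
  rcases Nat.eq_zero_or_pos n with rfl | hn
  · rw [betan_zero', betan_zero']
  · have hc : (0:ℝ) < (n : ℝ) * Real.log 2 := by
      have := Real.log_pos (by norm_num : (1:ℝ) < 2)
      have : (0:ℝ) < n := by exact_mod_cast hn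
      positivity
    rw [betan_eq, betan_eq, one_div]
    apply mul_le_mul_of_nonneg_left _ (le_of_lt (inv_pos.2 hc))
    exact Real.log_le_log (S_pos ν hν n q) (S_anti ν n h)


lemma S_holder (n : ℕ) (a b : ℝ) {t u : ℝ} (ht : 0 < t) (hu : 0 < u) (htu : t + u = 1) :
    S ν n (t*a + u*b) ≤ (S ν n a) ^ t * (S ν n b) ^ u := by
  have ht1 : t < 1 := by linarith
  have hconj : Real.HolderConjugate (1/t) (1/u) := by
    constructor
    · simp [htu]
    · positivity
    · positivity
  have key := Real.inner_le_Lp_mul_Lq (s := Dn ν n)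
    (fun k => ((ν (dyadic n k)).toReal) ^ (t*a)) (fun k => ((ν (dyadic n k)).toReal) ^ (u*b))
    hconj
  have hL : S ν n (t*a + u*b)
      = ∑ k ∈ Dn ν n, ((ν (dyadic n k)).toReal) ^ (t*a) * ((ν (dyadic n k)).toReal) ^ (u*b) := by
    refine Finset.sum_congr rfl fun k hk => ?_
    rw [← Real.rpow_add (r_pos ν hk)]
  have hR1 : ∀ k ∈ Dn ν n,
      |((ν (dyadic n k)).toReal) ^ (t*a)| ^ (1/t) = ((ν (dyadic n k)).toReal) ^ a := by
    intro k hk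
    rw [abs_of_nonneg (Real.rpow_nonneg ENNReal.toReal_nonneg _),
      ← Real.rpow_mul ENNReal.toReal_nonneg]
    congr 1
    field_simp
  have hR2 : ∀ k ∈ Dn ν n,
      |((ν (dyadic n k)).toReal) ^ (u*b)| ^ (1/u) = ((ν (dyadic n k)).toReal) ^ b := by
    intro k hk
    rw [abs_of_nonneg (Real.rpow_nonneg ENNReal.toReal_nonneg _),
      ← Real.rpow_mul ENNReal.toReal_nonneg]
    congr 1
    field_simp
  rw [Finset.sum_congr rfl hR1, Finset.sum_congr rfl hR2] at key
  rw [one_div_one_div, one_div_one_div] at key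
  rw [hL]
  exact key

lemma betan_convex (hν : ν (Set.Ioc 0 1) = 1) (n : ℕ) (a b : ℝ) {t u : ℝ}
    (ht : 0 ≤ t) (hu : 0 ≤ u) (htu : t + u = 1) :
    betan ν n (t*a + u*b) ≤ t * betan ν n a + u * betan ν n b := by
  rcases eq_or_lt_of_le ht with rfl | ht'
  · have : u = 1 := by linarith
    subst this; simp
  rcases eq_or_lt_of_le hu with rfl | hu'
  · have : t = 1 := by linarith
    subst this; simp
  rcases Nat.eq_zero_or_pos n with rfl | hn
  · simp [betan_zero']
  · have hc : (0:ℝ) < (n : ℝ) * Real.log 2 := by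
      have := Real.log_pos (by norm_num : (1:ℝ) < 2)
      have : (0:ℝ) < n := by exact_mod_cast hn
      positivity
    have hlog : Real.log (S ν n (t*a + u*b))
        ≤ t * Real.log (S ν n a) + u * Real.log (S ν n b) := by
      calc Real.log (S ν n (t*a + u*b))
          ≤ Real.log ((S ν n a) ^ t * (S ν n b) ^ u) :=
            Real.log_le_log (S_pos ν hν n _) (S_holder ν n a b ht' hu' htu)
        _ = t * Real.log (S ν n a) + u * Real.log (S ν n b) := by
            rw [Real.log_mul (Real.rpow_pos_of_pos (S_pos ν hν n a) t).ne'
              (Real.rpow_pos_of_pos (S_pos ν hν n b) u).ne',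
              Real.log_rpow (S_pos ν hν n a), Real.log_rpow (S_pos ν hν n b)]
    rw [betan_eq, betan_eq, betan_eq, one_div]
    have h2 := mul_le_mul_of_nonneg_left hlog (le_of_lt (inv_pos.2 hc))
    calc ((n:ℝ) * Real.log 2)⁻¹ * Real.log (S ν n (t*a + u*b))
        ≤ ((n:ℝ) * Real.log 2)⁻¹ * (t * Real.log (S ν n a) + u * Real.log (S ν n b)) := h2
      _ = t * (((n:ℝ) * Real.log 2)⁻¹ * Real.log (S ν n a))
          + u * (((n:ℝ) * Real.log 2)⁻¹ * Real.log (S ν n b)) := by ring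

lemma bddAbove_betan (hν : ν (Set.Ioc 0 1) = 1) {q : ℝ} (hq : 0 ≤ q) :
    Filter.IsBoundedUnder (· ≤ ·) Filter.atTop (fun n => betan ν n q) :=
  Filter.isBoundedUnder_of ⟨1, fun n => betan_le_one ν hν n hq⟩

lemma bddBelow_betan (hν : ν (Set.Ioc 0 1) = 1) {q : ℝ} (hq : 0 ≤ q) :
    Filter.IsBoundedUnder (· ≥ ·) Filter.atTop (fun n => betan ν n q) :=
  Filter.isBoundedUnder_of ⟨-q, fun n => neg_le_betan ν hν n hq⟩

lemma cobdd_betan (hν : ν (Set.Ioc 0 1) = 1) {q : ℝ} (hq : 0 ≤ q) :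
    Filter.IsCoboundedUnder (· ≤ ·) Filter.atTop (fun n => betan ν n q) :=
  (bddBelow_betan ν hν hq).isCoboundedUnder_le

lemma lq_le_one (hν : ν (Set.Ioc 0 1) = 1) {q : ℝ} (hq : 0 ≤ q) : lqSpectrum ν q ≤ 1 :=
  Filter.limsup_le_of_le (cobdd_betan ν hν hq)
    (Filter.Eventually.of_forall fun n => betan_le_one ν hν n hq)

lemma neg_le_lq (hν : ν (Set.Ioc 0 1) = 1) {q : ℝ} (hq : 0 ≤ q) : -q ≤ lqSpectrum ν q :=
  Filter.le_limsup_of_frequently_le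
    (Filter.Frequently.of_forall fun n => neg_le_betan ν hν n hq)
    (bddAbove_betan ν hν hq)

lemma lq_anti (hν : ν (Set.Ioc 0 1) = 1) {q q' : ℝ} (hq' : 0 ≤ q') (h : q' ≤ q) :
    lqSpectrum ν q ≤ lqSpectrum ν q' := by
  refine Filter.limsup_le_limsup
    (Filter.Eventually.of_forall fun n => betan_anti ν hν n h)
    (cobdd_betan ν hν (hq'.trans h)) (bddAbove_betan ν hν hq')

lemma lq_one (hν : ν (Set.Ioc 0 1) = 1) : lqSpectrum ν 1 = 0 := by
  have : ∀ n, betan ν n 1 = 0 := by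
    intro n
    rw [betan_eq, S_one ν hν, Real.log_one, mul_zero]
  unfold lqSpectrum
  simp only [this]
  exact Filter.limsup_const 0

lemma lq_convexOn (hν : ν (Set.Ioc 0 1) = 1) :
    ConvexOn ℝ (Set.Ici (0:ℝ)) (lqSpectrum ν) := by
  refine ⟨convex_Ici 0, fun a ha b hb t u ht hu htu => ?_⟩
  simp only [smul_eq_mul]
  have ha' : (0:ℝ) ≤ a := ha
  have hb' : (0:ℝ) ≤ b := hb
  have hab : 0 ≤ t*a + u*b := by positivity
  -- limsup argument
  have step1 : lqSpectrum ν (t*a + u*b)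
      ≤ Filter.atTop.limsup (fun n => t * betan ν n a + u * betan ν n b) := by
    refine Filter.limsup_le_limsup
      (Filter.Eventually.of_forall fun n => betan_convex ν hν n a b ht hu htu)
      (cobdd_betan ν hν hab) ?_
    refine Filter.isBoundedUnder_of ⟨t * 1 + u * 1, fun n => ?_⟩
    have h1 := betan_le_one ν hν n ha'
    have h2 := betan_le_one ν hν n hb'
    have := add_le_add (mul_le_mul_of_nonneg_left h1 ht) (mul_le_mul_of_nonneg_left h2 hu)
    simpa using this
  refine step1.trans ?_
  -- limsup (t·x + u·y) ≤ t limsup x + u limsup y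
  refine le_of_forall_pos_le_add fun ε hε => ?_
  have hA : ∀ᶠ n in Filter.atTop, betan ν n a < lqSpectrum ν a + ε/2 := by
    refine Filter.eventually_lt_of_limsup_lt ?_ (bddAbove_betan ν hν ha')
    show lqSpectrum ν a < lqSpectrum ν a + ε/2
    linarith
  have hB : ∀ᶠ n in Filter.atTop, betan ν n b < lqSpectrum ν b + ε/2 := by
    refine Filter.eventually_lt_of_limsup_lt ?_ (bddAbove_betan ν hν hb')
    show lqSpectrum ν b < lqSpectrum ν b + ε/2
    linarith
  have hcob : Filter.IsCoboundedUnder (· ≤ ·) Filter.atTop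
      (fun n => t * betan ν n a + u * betan ν n b) := by
    refine Filter.IsBoundedUnder.isCoboundedUnder_le
      (Filter.isBoundedUnder_of ⟨t * (-a) + u * (-b), fun n => ?_⟩)
    exact add_le_add (mul_le_mul_of_nonneg_left (neg_le_betan ν hν n ha') ht)
      (mul_le_mul_of_nonneg_left (neg_le_betan ν hν n hb') hu)
  refine Filter.limsup_le_of_le hcob ?_
  filter_upwards [hA, hB] with n hna hnb
  have h1 := mul_le_mul_of_nonneg_left hna.le ht
  have h2 := mul_le_mul_of_nonneg_left hnb.le hu
  nlinarith

lemma lq_continuousOn (hν : ν (Set.Ioc 0 1) = 1) :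
    ContinuousOn (lqSpectrum ν) (Set.Ioi 0) := by
  have := (lq_convexOn ν hν).continuousOn_interior
  rwa [interior_Ici] at this

lemma a_eq (n : ℕ) (q : ℝ) :
    (∑ k ∈ (Finset.range (2 ^ n)).filter (fun k => ν (dyadic n k) ≠ 0),
      ((ν (dyadic n k)).toReal * ((2 : ℝ) ^ n)⁻¹) ^ q)
    = S ν n q * (((2:ℝ) ^ n)⁻¹) ^ q := by
  unfold S Dn
  rw [Finset.sum_mul]
  refine Finset.sum_congr rfl fun k hk => ?_
  rw [Real.mul_rpow ENNReal.toReal_nonneg (by positivity)]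

lemma log_S_eq {n : ℕ} (hn : 1 ≤ n) (q : ℝ) :
    Real.log (S ν n q) = ((n:ℝ) * Real.log 2) * betan ν n q := by
  have hc : ((n:ℝ) * Real.log 2) ≠ 0 := by
    have := Real.log_pos (by norm_num : (1:ℝ) < 2)
    have h2 : (0:ℝ) < n := by exact_mod_cast hn
    positivity
  rw [betan_eq]
  field_simp

lemma pow_inv_rpow (n : ℕ) (q : ℝ) :
    (((2:ℝ)^n)⁻¹) ^ q = Real.exp (-(((n:ℝ) * Real.log 2) * q)) := by
  rw [Real.rpow_def_of_pos (by positivity), Real.log_inv, Real.log_pow]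
  ring_nf

lemma a_le (hν : ν (Set.Ioc 0 1) = 1) {q c : ℝ} {n : ℕ} (hn : 1 ≤ n)
    (hb : betan ν n q ≤ c) :
    S ν n q * (((2:ℝ)^n)⁻¹) ^ q ≤ (Real.exp (Real.log 2 * (c - q))) ^ n := by
  have hc : (0:ℝ) < (n:ℝ) * Real.log 2 := by
    have := Real.log_pos (by norm_num : (1:ℝ) < 2)
    have h2 : (0:ℝ) < n := by exact_mod_cast hn
    positivity
  have h1 : S ν n q ≤ Real.exp (((n:ℝ) * Real.log 2) * c) := by
    rw [← Real.exp_log (S_pos ν hν n q), Real.exp_le_exp, log_S_eq ν hn]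
    exact mul_le_mul_of_nonneg_left hb hc.le
  rw [pow_inv_rpow]
  calc S ν n q * Real.exp (-(((n:ℝ) * Real.log 2) * q))
      ≤ Real.exp (((n:ℝ) * Real.log 2) * c) * Real.exp (-(((n:ℝ) * Real.log 2) * q)) :=
        mul_le_mul_of_nonneg_right h1 (Real.exp_pos _).le
    _ = Real.exp ((n:ℝ) * (Real.log 2 * (c - q))) := by rw [← Real.exp_add]; ring_nf
    _ = (Real.exp (Real.log 2 * (c - q))) ^ n := by rw [← Real.exp_nat_mul]

lemma one_le_a (hν : ν (Set.Ioc 0 1) = 1) {q : ℝ} {n : ℕ} (hn : 1 ≤ n)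
    (hb : q ≤ betan ν n q) :
    1 ≤ S ν n q * (((2:ℝ)^n)⁻¹) ^ q := by
  have hc : (0:ℝ) < (n:ℝ) * Real.log 2 := by
    have := Real.log_pos (by norm_num : (1:ℝ) < 2)
    have h2 : (0:ℝ) < n := by exact_mod_cast hn
    positivity
  have h1 : Real.exp (((n:ℝ) * Real.log 2) * q) ≤ S ν n q := by
    rw [← Real.exp_log (S_pos ν hν n q), Real.exp_le_exp, log_S_eq ν hn]
    exact mul_le_mul_of_nonneg_left hb hc.le
  rw [pow_inv_rpow]
  calc (1:ℝ) = Real.exp (((n:ℝ) * Real.log 2) * q)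
        * Real.exp (-(((n:ℝ) * Real.log 2) * q)) := by
        rw [← Real.exp_add]; ring_nf; rw [Real.exp_zero]
    _ ≤ S ν n q * Real.exp (-(((n:ℝ) * Real.log 2) * q)) :=
        mul_le_mul_of_nonneg_right h1 (Real.exp_pos _).le

lemma a_nonneg (n : ℕ) (q : ℝ) :
    0 ≤ ∑ k ∈ (Finset.range (2 ^ n)).filter (fun k => ν (dyadic n k) ≠ 0),
      ((ν (dyadic n k)).toReal * ((2 : ℝ) ^ n)⁻¹) ^ q :=
  Finset.sum_nonneg fun k _ => Real.rpow_nonneg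
    (mul_nonneg ENNReal.toReal_nonneg (by positivity)) q

lemma summable_of_gt (hν : ν (Set.Ioc 0 1) = 1) {q : ℝ} (hq : 0 < q)
    (hlt : lqSpectrum ν q < q) :
    Summable (fun n : ℕ =>
      ∑ k ∈ (Finset.range (2 ^ n)).filter (fun k => ν (dyadic n k) ≠ 0),
        ((ν (dyadic n k)).toReal * ((2 : ℝ) ^ n)⁻¹) ^ q) := by
  set c := (lqSpectrum ν q + q)/2 with hc
  have hc1 : lqSpectrum ν q < c := by rw [hc]; linarith
  have hc2 : c < q := by rw [hc]; linarith
  set ρ := Real.exp (Real.log 2 * (c - q)) with hρ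
  have hρ0 : 0 ≤ ρ := (Real.exp_pos _).le
  have hρ1 : ρ < 1 := by
    rw [hρ, Real.exp_lt_one_iff]
    have := Real.log_pos (by norm_num : (1:ℝ) < 2)
    nlinarith
  have hev : ∀ᶠ n in Filter.atTop, betan ν n q < c :=
    Filter.eventually_lt_of_limsup_lt hc1 (bddAbove_betan ν hν hq.le)
  obtain ⟨N, hN⟩ := Filter.eventually_atTop.1 (hev.and (Filter.eventually_ge_atTop 1))
  rw [← summable_nat_add_iff N]
  refine Summable.of_nonneg_of_le (fun n => a_nonneg ν _ q) (fun n => ?_)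
    ((summable_geometric_of_lt_one hρ0 hρ1).mul_right (ρ ^ N))
  obtain ⟨hb, hn1⟩ := hN (n + N) (Nat.le_add_left N n)
  rw [a_eq]
  calc S ν (n + N) q * (((2:ℝ)^(n+N))⁻¹) ^ q ≤ ρ ^ (n + N) := a_le ν hν hn1 hb.le
    _ = ρ ^ n * ρ ^ N := pow_add ρ n N

lemma not_summable_of_lt (hν : ν (Set.Ioc 0 1) = 1) {q : ℝ} (hq : 0 < q)
    (hlt : q < lqSpectrum ν q) :
    ¬ Summable (fun n : ℕ =>
      ∑ k ∈ (Finset.range (2 ^ n)).filter (fun k => ν (dyadic n k) ≠ 0),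
        ((ν (dyadic n k)).toReal * ((2 : ℝ) ^ n)⁻¹) ^ q) := by
  intro hsum
  have h0 := hsum.tendsto_atTop_zero
  have hev : ∀ᶠ n in Filter.atTop,
      (∑ k ∈ (Finset.range (2 ^ n)).filter (fun k => ν (dyadic n k) ≠ 0),
        ((ν (dyadic n k)).toReal * ((2 : ℝ) ^ n)⁻¹) ^ q) < 1 :=
    h0.eventually_lt_const one_pos
  have hfreq : ∃ᶠ n in Filter.atTop, q < betan ν n q :=
    Filter.frequently_lt_of_lt_limsup (cobdd_betan ν hν hq.le) hlt
  obtain ⟨n, hb, hn1, hlt1⟩ :=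
    (hfreq.and_eventually ((Filter.eventually_ge_atTop 1).and hev)).exists
  have h1 := one_le_a ν hν hn1 hb.le
  rw [a_eq] at hlt1
  linarith

end Stmt8Aux

open Stmt8Aux Filter Topology

set_option linter.unusedSectionVars false in
/-- If `q̄ = inf{q > 0 : β_ν(q) - q ≤ 0} > 0`, then `q̄ ∈ (0,1)`, `q̄` is the unique
fixed point of `β_ν` on `(0,1)`, and `q̄ = inf{q > 0 : Σ_{C ∈ D_ν} (ν(C)Λ(C))^q < ∞}`. -/
theorem stmt8 (ν : Measure ℝ) [IsProbabilityMeasure ν] (hν : ν (Set.Ioc 0 1) = 1)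
    (qbar : ℝ) (hqbar : qbar = sInf {q : ℝ | 0 < q ∧ lqSpectrum ν q - q ≤ 0})
    (hpos : 0 < qbar) :
    qbar ∈ Set.Ioo (0:ℝ) 1 ∧
    lqSpectrum ν qbar = qbar ∧
    (∀ q ∈ Set.Ioo (0:ℝ) 1, lqSpectrum ν q = q → q = qbar) ∧
    qbar = sInf {q : ℝ | 0 < q ∧
      Summable (fun n : ℕ =>
        ∑ k ∈ (Finset.range (2 ^ n)).filter (fun k => ν (dyadic n k) ≠ 0),
          ((ν (dyadic n k)).toReal * ((2 : ℝ) ^ n)⁻¹) ^ q)} := by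
  set A : Set ℝ := {q : ℝ | 0 < q ∧ lqSpectrum ν q - q ≤ 0} with hA
  have h1A : (1:ℝ) ∈ A := ⟨one_pos, by rw [lq_one ν hν]; norm_num⟩
  have hAbdd : BddBelow A := ⟨0, fun q hq => hq.1.le⟩
  have hqbar_le_one : qbar ≤ 1 := hqbar ▸ csInf_le hAbdd h1A
  have hgcont : ContinuousOn (fun q => lqSpectrum ν q - q) (Set.Ioi 0) :=
    (lq_continuousOn ν hν).sub continuousOn_id
  -- f q < 0 for q > qbar
  have hneg : ∀ q, qbar < q → lqSpectrum ν q - q < 0 := by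
    intro q hq
    obtain ⟨a, haA, haq⟩ : ∃ a ∈ A, a < q := by
      by_contra h; push_neg at h
      have : q ≤ qbar := hqbar ▸ le_csInf ⟨1, h1A⟩ h
      linarith
    have h1 := lq_anti ν hν haA.1.le haq.le
    have h2 := haA.2
    linarith
  -- f q > 0 for 0 < q < qbar
  have hposf : ∀ q, 0 < q → q < qbar → 0 < lqSpectrum ν q - q := by
    intro q h0 hq
    by_contra h; push_neg at h
    have hmem : q ∈ A := ⟨h0, h⟩
    have : qbar ≤ q := hqbar ▸ csInf_le hAbdd hmem
    linarith
  -- continuity at any point of Ioi 0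
  have hctAt : ∀ x : ℝ, 0 < x → ContinuousAt (fun q => lqSpectrum ν q - q) x := by
    intro x hx
    exact hgcont.continuousAt (isOpen_Ioi.mem_nhds hx)
  -- qbar < 1
  have hqbar_lt_one : qbar < 1 := by
    rcases lt_or_eq_of_le hqbar_le_one with h | h
    · exact h
    · exfalso
      -- f is < 0 at 1 and continuous, so f < 0 slightly to the left of 1,
      -- contradicting qbar = 1 (inf of A)
      have hf1 : lqSpectrum ν 1 - 1 < 0 := by rw [lq_one ν hν]; norm_num
      have hev : ∀ᶠ q in 𝓝[<] (1:ℝ), lqSpectrum ν q - q < 0 :=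
        (((hctAt 1 one_pos).tendsto.mono_left nhdsWithin_le_nhds).eventually_lt_const hf1)
      have hev0 : ∀ᶠ q in 𝓝[<] (1:ℝ), (0:ℝ) < q :=
        eventually_nhdsWithin_of_eventually_nhds (eventually_gt_nhds one_pos)
      obtain ⟨q, hq1, hq2, hq3⟩ := (hev.and (hev0.and self_mem_nhdsWithin)).exists
      have : q ∈ A := ⟨hq2, hq1.le⟩
      have : qbar ≤ q := hqbar ▸ csInf_le hAbdd this
      rw [h] at this
      exact absurd hq3 (not_lt.2 this)
  -- fixed point
  have hfix : lqSpectrum ν qbar - qbar = 0 := by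
    have hle : lqSpectrum ν qbar - qbar ≤ 0 := by
      have ht : Tendsto (fun q => lqSpectrum ν q - q) (𝓝[>] qbar)
          (𝓝 (lqSpectrum ν qbar - qbar)) :=
        (hctAt qbar hpos).tendsto.mono_left nhdsWithin_le_nhds
      refine le_of_tendsto ht ?_
      filter_upwards [self_mem_nhdsWithin] with q hq
      exact (hneg q hq).le
    have hge : 0 ≤ lqSpectrum ν qbar - qbar := by
      have ht : Tendsto (fun q => lqSpectrum ν q - q) (𝓝[<] qbar)
          (𝓝 (lqSpectrum ν qbar - qbar)) :=
        (hctAt qbar hpos).tendsto.mono_left nhdsWithin_le_nhds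
      refine ge_of_tendsto ht ?_
      have hev0 : ∀ᶠ q in 𝓝[<] qbar, (0:ℝ) < q :=
        eventually_nhdsWithin_of_eventually_nhds (eventually_gt_nhds hpos)
      filter_upwards [self_mem_nhdsWithin, hev0] with q hq h0
      exact (hposf q h0 hq).le
    linarith
  have hfix' : lqSpectrum ν qbar = qbar := by linarith
  refine ⟨⟨hpos, hqbar_lt_one⟩, hfix', ?_, ?_⟩
  · -- uniqueness
    intro q hq hfq
    rcases lt_trichotomy q qbar with h | h | h
    · have := hposf q hq.1 h
      rw [hfq] at this
      linarith
    · exact h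
    · have := hneg q h
      rw [hfq] at this
      linarith
  · -- characterization via summability
    set B : Set ℝ := {q : ℝ | 0 < q ∧
      Summable (fun n : ℕ =>
        ∑ k ∈ (Finset.range (2 ^ n)).filter (fun k => ν (dyadic n k) ≠ 0),
          ((ν (dyadic n k)).toReal * ((2 : ℝ) ^ n)⁻¹) ^ q)} with hB
    have hBsub : ∀ q ∈ Set.Ioi qbar, q ∈ B := by
      intro q hq
      have hq0 : 0 < q := hpos.trans hq
      refine ⟨hq0, summable_of_gt ν hν hq0 ?_⟩
      have := hneg q hq
      linarith
    have hBbdd : BddBelow B := ⟨0, fun q hq => hq.1.le⟩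
    have hBlb : ∀ q ∈ B, qbar ≤ q := by
      intro q hq
      by_contra h
      push_neg at h
      have h1 := hposf q hq.1 h
      exact not_summable_of_lt ν hν hq.1 (by linarith) hq.2
    have h1B : (1:ℝ) ∈ B := hBsub 1 hqbar_lt_one
    refine le_antisymm (le_csInf ⟨1, h1B⟩ hBlb) ?_
    refine le_of_forall_pos_le_add fun ε hε => ?_
    calc sInf B ≤ qbar + ε := csInf_le hBbdd (hBsub _ (by simp; linarith))
end

section
/- Let ν be a Borel probability measure on (0,1] with L^q-spectrum β_ν and fixed point q̄_ν = inf{q>0 : β_ν(q) ≤ q}. Then q̄_ν = sup_{α ≥ 0} β̂_ν(α)/(1+α), where β̂_ν(α) = inf_{q∈ℝ} (β_ν(q) + αq) is the Legendre transform of β_ν. -/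
open MeasureTheory
open scoped Classical

/-- The `L^q`-spectrum with values in `EReal` (so that it is meaningful for all `q ∈ ℝ`). -/
noncomputable def lqSpectrumE (ν : Measure ℝ) (q : ℝ) : EReal :=
  Filter.atTop.limsup (fun n => ((betan ν n q : ℝ) : EReal))

/-- The Legendre transform `β̂_ν(α) = inf_{q ∈ ℝ} (β_ν(q) + αq)`. -/
noncomputable def legendre (ν : Measure ℝ) (α : ℝ) : EReal :=
  ⨅ q : ℝ, lqSpectrumE ν q + ((α * q : ℝ) : EReal)

namespace Stmt9Aux

open Filter Real
open scoped ENNReal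
set_option linter.unusedSectionVars false

noncomputable def Dn (ν : Measure ℝ) (n : ℕ) : Finset ℕ :=
  (Finset.range (2 ^ n)).filter (fun k => ν (dyadic n k) ≠ 0)

noncomputable def Sn (ν : Measure ℝ) (n : ℕ) (q : ℝ) : ℝ :=
  ∑ k ∈ Dn ν n, ((ν (dyadic n k)).toReal) ^ q

lemma betan_eq (ν : Measure ℝ) (n : ℕ) (q : ℝ) :
    betan ν n q = (1 / ((n : ℝ) * Real.log 2)) * Real.log (Sn ν n q) := rfl

variable {ν : Measure ℝ} [IsProbabilityMeasure ν]

lemma sum_dyadic_meas (hν : ν (Set.Ioc 0 1) = 1) (n : ℕ) :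
    ∑ k ∈ Finset.range (2 ^ n), ν (dyadic n k) = 1 := by
  have key : ∀ m : ℕ, ∑ k ∈ Finset.range m, ν (dyadic n k)
      = ν (Set.Ioc 0 ((m : ℝ) / 2 ^ n)) := by
    intro m
    induction m with
    | zero => simp
    | succ m ih =>
      rw [Finset.sum_range_succ, ih]
      have hpow : (0:ℝ) < 2 ^ n := by positivity
      have hdisj : Disjoint (Set.Ioc (0:ℝ) ((m:ℝ)/2^n)) (dyadic n m) := by
        unfold dyadic
        rw [Set.Ioc_disjoint_Ioc]
        simp [le_max_iff, min_le_iff]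
      rw [← measure_union hdisj measurableSet_Ioc]
      unfold dyadic
      rw [Set.Ioc_union_Ioc_eq_Ioc (by positivity) (by gcongr; linarith)]
      push_cast
      ring_nf
  have h := key (2 ^ n)
  rw [h]
  have : ((2 ^ n : ℕ) : ℝ) / 2 ^ n = 1 := by
    push_cast
    field_simp
  rw [this, hν]

lemma sum_toReal (hν : ν (Set.Ioc 0 1) = 1) (n : ℕ) :
    ∑ k ∈ Finset.range (2 ^ n), (ν (dyadic n k)).toReal = 1 := by
  rw [← ENNReal.toReal_sum (fun a _ => measure_ne_top ν _), sum_dyadic_meas hν n,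
    ENNReal.toReal_one]

lemma exists_big (hν : ν (Set.Ioc 0 1) = 1) (n : ℕ) :
    ∃ k ∈ Finset.range (2 ^ n), ((2 : ℝ) ^ n)⁻¹ ≤ (ν (dyadic n k)).toReal := by
  refine Finset.exists_le_of_sum_le (s := Finset.range (2 ^ n))
    (f := fun _ => ((2 : ℝ) ^ n)⁻¹) (g := fun k => (ν (dyadic n k)).toReal)
    (by simp [Finset.nonempty_range_iff]) ?_
  rw [sum_toReal hν n, Finset.sum_const, Finset.card_range, nsmul_eq_mul]
  push_cast
  rw [mul_inv_cancel₀ (by positivity : ((2:ℝ)^n) ≠ 0)]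

lemma mem_Dn {n k : ℕ} (h : k ∈ Dn ν n) : k < 2 ^ n ∧ ν (dyadic n k) ≠ 0 := by
  simpa [Dn] using h

lemma toReal_pos {n k : ℕ} (h : k ∈ Dn ν n) : 0 < (ν (dyadic n k)).toReal :=
  ENNReal.toReal_pos (mem_Dn h).2 (measure_ne_top ν _)

lemma toReal_le_one (n k : ℕ) : (ν (dyadic n k)).toReal ≤ 1 := by
  have h : ν (dyadic n k) ≤ 1 := prob_le_one
  simpa using ENNReal.toReal_mono (by simp) h

lemma exists_big_Dn (hν : ν (Set.Ioc 0 1) = 1) (n : ℕ) :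
    ∃ k ∈ Dn ν n, ((2 : ℝ) ^ n)⁻¹ ≤ (ν (dyadic n k)).toReal := by
  obtain ⟨k, hk, hle⟩ := exists_big hν n
  have hpos : (0:ℝ) < (ν (dyadic n k)).toReal := lt_of_lt_of_le (by positivity) hle
  refine ⟨k, ?_, hle⟩
  simp only [Dn, Finset.mem_filter]
  exact ⟨hk, fun h0 => by simp [h0] at hpos⟩

lemma Dn_nonempty (hν : ν (Set.Ioc 0 1) = 1) (n : ℕ) : (Dn ν n).Nonempty := by
  obtain ⟨k, hk, _⟩ := exists_big_Dn hν n
  exact ⟨k, hk⟩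

lemma Sn_pos (hν : ν (Set.Ioc 0 1) = 1) (n : ℕ) (q : ℝ) : 0 < Sn ν n q := by
  obtain ⟨k, hk⟩ := Dn_nonempty hν n
  exact Finset.sum_pos' (fun i hi => (Real.rpow_pos_of_pos (toReal_pos hi) q).le)
    ⟨k, hk, Real.rpow_pos_of_pos (toReal_pos hk) q⟩

lemma Sn_one (hν : ν (Set.Ioc 0 1) = 1) (n : ℕ) : Sn ν n 1 = 1 := by
  have : Sn ν n 1 = ∑ k ∈ Finset.range (2 ^ n), (ν (dyadic n k)).toReal := by
    rw [Sn, Dn]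
    rw [Finset.sum_filter]
    apply Finset.sum_congr rfl
    intro k _
    by_cases h : ν (dyadic n k) = 0 <;> simp [h]
  rw [this, sum_toReal hν n]
lemma Sn_mono (hν : ν (Set.Ioc 0 1) = 1) (n : ℕ) {q q' : ℝ} (h : q ≤ q') :
    Sn ν n q' ≤ Sn ν n q := by
  apply Finset.sum_le_sum
  intro k hk
  exact Real.rpow_le_rpow_of_exponent_ge (toReal_pos hk) (toReal_le_one n k) h

lemma betan_mono (hν : ν (Set.Ioc 0 1) = 1) (n : ℕ) {q q' : ℝ} (h : q ≤ q') :
    betan ν n q' ≤ betan ν n q := by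
  rw [betan_eq, betan_eq]
  apply mul_le_mul_of_nonneg_left
  · exact Real.log_le_log (Sn_pos hν n q') (Sn_mono hν n h)
  · positivity

lemma betan_one (hν : ν (Set.Ioc 0 1) = 1) (n : ℕ) : betan ν n 1 = 0 := by
  rw [betan_eq, Sn_one hν n, Real.log_one, mul_zero]

lemma betan_le_one (hν : ν (Set.Ioc 0 1) = 1) (n : ℕ) {q : ℝ} (hq : 0 ≤ q) :
    betan ν n q ≤ 1 := by
  rcases Nat.eq_zero_or_pos n with hn | hn
  · subst hn; simp [betan_eq]
  · have hlog2 : (0:ℝ) < Real.log 2 := Real.log_pos (by norm_num)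
    have hn' : (0:ℝ) < (n:ℝ) := by exact_mod_cast hn
    have hS : Sn ν n q ≤ 2 ^ n := by
      calc Sn ν n q ≤ ∑ _k ∈ Dn ν n, (1:ℝ) := by
            apply Finset.sum_le_sum
            intro k hk
            exact Real.rpow_le_one (toReal_pos hk).le (toReal_le_one n k) hq
        _ = (Dn ν n).card := by simp
        _ ≤ ((2:ℕ) ^ n : ℕ) := by
            exact_mod_cast le_trans (Finset.card_filter_le _ _) (le_of_eq (Finset.card_range _))
        _ = (2:ℝ) ^ n := by push_cast; ring
    have hlogS : Real.log (Sn ν n q) ≤ (n:ℝ) * Real.log 2 := by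
      calc Real.log (Sn ν n q) ≤ Real.log ((2:ℝ) ^ n) := Real.log_le_log (Sn_pos hν n q) hS
        _ = (n:ℝ) * Real.log 2 := by rw [Real.log_pow]
    rw [betan_eq]
    rw [div_mul_eq_mul_div, one_mul, div_le_one (by positivity)]
    exact hlogS

lemma betan_ge_neg (hν : ν (Set.Ioc 0 1) = 1) (n : ℕ) {q : ℝ} (hq : 0 ≤ q) :
    -q ≤ betan ν n q := by
  rcases Nat.eq_zero_or_pos n with hn | hn
  · subst hn; simp [betan_eq]; linarith
  · have hlog2 : (0:ℝ) < Real.log 2 := Real.log_pos (by norm_num)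
    have hn' : (0:ℝ) < (n:ℝ) := by exact_mod_cast hn
    obtain ⟨k, hk, hle⟩ := exists_big_Dn hν n
    have hS : ((2:ℝ) ^ n)⁻¹ ^ q ≤ Sn ν n q := by
      calc ((2:ℝ) ^ n)⁻¹ ^ q ≤ ((ν (dyadic n k)).toReal) ^ q :=
            Real.rpow_le_rpow (by positivity) hle hq
        _ ≤ Sn ν n q := Finset.single_le_sum
            (fun i hi => (Real.rpow_pos_of_pos (toReal_pos hi) q).le) hk
    have hlogS : -(q * ((n:ℝ) * Real.log 2)) ≤ Real.log (Sn ν n q) := by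
      calc -(q * ((n:ℝ) * Real.log 2)) = Real.log (((2:ℝ) ^ n)⁻¹ ^ q) := by
            rw [Real.log_rpow (by positivity), Real.log_inv, Real.log_pow]
            ring
        _ ≤ Real.log (Sn ν n q) := Real.log_le_log (by positivity) hS
    rw [betan_eq]
    rw [div_mul_eq_mul_div, one_mul, le_div_iff₀ (by positivity)]
    linarith

lemma betan_nonneg (hν : ν (Set.Ioc 0 1) = 1) (n : ℕ) {q : ℝ} (hq : q ≤ 1) :
    0 ≤ betan ν n q := by
  have := betan_mono hν n hq
  rw [betan_one hν n] at this
  linarith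

lemma betan_ge_neg_max (hν : ν (Set.Ioc 0 1) = 1) (n : ℕ) (q : ℝ) :
    -(max q 0) ≤ betan ν n q := by
  rcases le_total q 1 with h | h
  · have := betan_nonneg hν n h
    have : -(max q 0) ≤ 0 := by simp [le_max_iff]
    linarith [betan_nonneg hν n h]
  · rw [max_eq_left (by linarith)]
    exact betan_ge_neg hν n (by linarith)

lemma Sn_holder (hν : ν (Set.Ioc 0 1) = 1) (n : ℕ) {a b l m : ℝ}
    (hl : 0 ≤ l) (hm : 0 ≤ m) (hlm : l + m = 1) :
    Sn ν n (l * a + m * b) ≤ Sn ν n a ^ l * Sn ν n b ^ m := by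
  set F := Sn ν n a with hF
  set G := Sn ν n b with hG
  have hFpos : 0 < F := Sn_pos hν n a
  have hGpos : 0 < G := Sn_pos hν n b
  have key : ∀ k ∈ Dn ν n, ((ν (dyadic n k)).toReal) ^ (l * a + m * b)
      ≤ F ^ l * G ^ m * (l * (((ν (dyadic n k)).toReal) ^ a / F)
        + m * (((ν (dyadic n k)).toReal) ^ b / G)) := by
    intro k hk
    set x := (ν (dyadic n k)).toReal with hx
    have hxpos : 0 < x := toReal_pos hk
    have h1 : x ^ (l * a + m * b) = (x ^ a) ^ l * (x ^ b) ^ m := by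
      rw [Real.rpow_add hxpos, mul_comm l a, mul_comm m b,
        Real.rpow_mul hxpos.le, Real.rpow_mul hxpos.le]
    have h2 : (x ^ a) ^ l * (x ^ b) ^ m
        = F ^ l * G ^ m * ((x ^ a / F) ^ l * (x ^ b / G) ^ m) := by
      rw [Real.div_rpow (Real.rpow_pos_of_pos hxpos a).le hFpos.le,
        Real.div_rpow (Real.rpow_pos_of_pos hxpos b).le hGpos.le]
      field_simp
      try ring
    have h3 : (x ^ a / F) ^ l * (x ^ b / G) ^ m
        ≤ l * (x ^ a / F) + m * (x ^ b / G) :=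
      Real.geom_mean_le_arith_mean2_weighted hl hm (by positivity) (by positivity) hlm
    rw [h1, h2]
    exact mul_le_mul_of_nonneg_left h3 (by positivity)
  calc Sn ν n (l * a + m * b) ≤ ∑ k ∈ Dn ν n, (F ^ l * G ^ m *
        (l * (((ν (dyadic n k)).toReal) ^ a / F) + m * (((ν (dyadic n k)).toReal) ^ b / G))) :=
        Finset.sum_le_sum key
    _ = F ^ l * G ^ m * (l * (F / F) + m * (G / G)) := by
        rw [← Finset.mul_sum]
        congr 1
        rw [Finset.sum_add_distrib, ← Finset.mul_sum, ← Finset.mul_sum,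
          ← Finset.sum_div, ← Finset.sum_div]
        rfl
    _ = F ^ l * G ^ m := by
        rw [div_self hFpos.ne', div_self hGpos.ne', mul_one, mul_one, hlm, mul_one]

lemma betan_convex (hν : ν (Set.Ioc 0 1) = 1) (n : ℕ) {a b l m : ℝ}
    (hl : 0 ≤ l) (hm : 0 ≤ m) (hlm : l + m = 1) :
    betan ν n (l * a + m * b) ≤ l * betan ν n a + m * betan ν n b := by
  rcases Nat.eq_zero_or_pos n with hn | hn
  · subst hn; simp [betan_eq]
  · have hlog2 : (0:ℝ) < Real.log 2 := Real.log_pos (by norm_num)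
    have hn' : (0:ℝ) < (n:ℝ) := by exact_mod_cast hn
    have hc : (0:ℝ) < (n:ℝ) * Real.log 2 := by positivity
    have h1 : Real.log (Sn ν n (l * a + m * b))
        ≤ l * Real.log (Sn ν n a) + m * Real.log (Sn ν n b) := by
      calc Real.log (Sn ν n (l * a + m * b))
          ≤ Real.log (Sn ν n a ^ l * Sn ν n b ^ m) :=
            Real.log_le_log (Sn_pos hν n _) (Sn_holder hν n hl hm hlm)
        _ = l * Real.log (Sn ν n a) + m * Real.log (Sn ν n b) := by
            rw [Real.log_mul (Real.rpow_pos_of_pos (Sn_pos hν n a) l).ne'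
              (Real.rpow_pos_of_pos (Sn_pos hν n b) m).ne',
              Real.log_rpow (Sn_pos hν n a), Real.log_rpow (Sn_pos hν n b)]
    rw [betan_eq, betan_eq, betan_eq]
    rw [div_mul_eq_mul_div, one_mul, div_le_iff₀ hc]
    refine le_trans h1 (le_of_eq ?_)
    field_simp
    try ring

lemma lq_one (hν : ν (Set.Ioc 0 1) = 1) : lqSpectrumE ν 1 = 0 := by
  have h : (fun n => ((betan ν n 1 : ℝ) : EReal)) = fun _ => (0 : EReal) := by
    funext n
    rw [betan_one hν n, EReal.coe_zero]
  rw [lqSpectrumE, h, Filter.limsup_const]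

lemma lq_antitone (hν : ν (Set.Ioc 0 1) = 1) {q q' : ℝ} (h : q ≤ q') :
    lqSpectrumE ν q' ≤ lqSpectrumE ν q := by
  exact Filter.limsup_le_limsup (Filter.Eventually.of_forall fun n =>
    EReal.coe_le_coe_iff.2 (betan_mono hν n h))

lemma lq_le_one (hν : ν (Set.Ioc 0 1) = 1) {q : ℝ} (hq : 0 ≤ q) :
    lqSpectrumE ν q ≤ (1 : ℝ) := by
  apply Filter.limsup_le_of_le (h := Filter.Eventually.of_forall fun n => ?_)
  exact_mod_cast betan_le_one hν n hq

lemma lq_ge (hν : ν (Set.Ioc 0 1) = 1) (q : ℝ) :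
    ((-(max q 0) : ℝ) : EReal) ≤ lqSpectrumE ν q := by
  apply Filter.le_limsup_of_frequently_le'
  apply Filter.Eventually.frequently
  exact Filter.Eventually.of_forall fun n => by exact_mod_cast betan_ge_neg_max hν n q

lemma lq_ne_bot (hν : ν (Set.Ioc 0 1) = 1) (q : ℝ) : lqSpectrumE ν q ≠ ⊥ := by
  intro h
  have := lq_ge hν q
  rw [h, le_bot_iff] at this
  exact EReal.coe_ne_bot _ this

lemma lq_ne_top_of_nonneg (hν : ν (Set.Ioc 0 1) = 1) {q : ℝ} (hq : 0 ≤ q) :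
    lqSpectrumE ν q ≠ ⊤ := by
  intro h
  have := lq_le_one hν hq
  rw [h, top_le_iff] at this
  exact EReal.coe_ne_top _ this

lemma lq_nonneg (hν : ν (Set.Ioc 0 1) = 1) {q : ℝ} (hq : q ≤ 1) :
    (0 : EReal) ≤ lqSpectrumE ν q := by
  have := lq_antitone hν hq
  rw [lq_one hν] at this
  exact this

lemma gq_nonneg (hν : ν (Set.Ioc 0 1) = 1) {q : ℝ} (hq : q ≤ 1)
    (htop : lqSpectrumE ν q ≠ ⊤) : 0 ≤ (lqSpectrumE ν q).toReal := by
  have h := lq_nonneg hν hq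
  rw [← EReal.coe_toReal htop (lq_ne_bot hν q)] at h
  exact_mod_cast h

lemma lq_eventually_le (hν : ν (Set.Ioc 0 1) = 1) {q : ℝ} (htop : lqSpectrumE ν q ≠ ⊤)
    {ε : ℝ} (hε : 0 < ε) :
    ∀ᶠ n in Filter.atTop, betan ν n q ≤ (lqSpectrumE ν q).toReal + ε := by
  have h1 : lqSpectrumE ν q < (((lqSpectrumE ν q).toReal + ε : ℝ) : EReal) := by
    conv_lhs => rw [← EReal.coe_toReal htop (lq_ne_bot hν q)]
    exact_mod_cast lt_add_of_pos_right _ hε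
  have h2 := Filter.eventually_lt_of_limsup_lt h1
  filter_upwards [h2] with n hn
  exact le_of_lt (by exact_mod_cast hn)

lemma chord (hν : ν (Set.Ioc 0 1) = 1) {q1 t q2 : ℝ} (h1 : q1 < t) (h2 : t < q2)
    (hb1 : lqSpectrumE ν q1 ≠ ⊤) (hb2 : lqSpectrumE ν q2 ≠ ⊤)
    (hbt : ((t : ℝ) : EReal) ≤ lqSpectrumE ν t) :
    t * (q2 - q1) ≤ (lqSpectrumE ν q1).toReal * (q2 - t)
      + (lqSpectrumE ν q2).toReal * (t - q1) := by
  set g1 := (lqSpectrumE ν q1).toReal with hg1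
  set g2 := (lqSpectrumE ν q2).toReal with hg2
  have hq21 : (0:ℝ) < q2 - q1 := by linarith
  set l := (q2 - t) / (q2 - q1) with hldef
  set m := (t - q1) / (q2 - q1) with hmdef
  have hl : 0 ≤ l := div_nonneg (by linarith) (by linarith)
  have hm : 0 ≤ m := div_nonneg (by linarith) (by linarith)
  have hlm : l + m = 1 := by
    rw [hldef, hmdef]
    field_simp
    try ring
  have hrep : l * q1 + m * q2 = t := by
    rw [hldef, hmdef]
    field_simp
    ring
  have main : ∀ ε : ℝ, 0 < ε → t ≤ l * g1 + m * g2 + ε := by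
    intro ε hε
    have e1 := lq_eventually_le hν hb1 hε
    have e2 := lq_eventually_le hν hb2 hε
    have ev : ∀ᶠ n in Filter.atTop,
        ((betan ν n t : ℝ) : EReal) ≤ ((l * g1 + m * g2 + ε : ℝ) : EReal) := by
      filter_upwards [e1, e2] with n hn1 hn2
      have hconv := betan_convex hν n (a := q1) (b := q2) hl hm hlm
      rw [hrep] at hconv
      have hb : betan ν n t ≤ l * (g1 + ε) + m * (g2 + ε) :=
        le_trans hconv (add_le_add (mul_le_mul_of_nonneg_left hn1 hl)
          (mul_le_mul_of_nonneg_left hn2 hm))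
      have heq : l * (g1 + ε) + m * (g2 + ε) = l * g1 + m * g2 + ε := by
        linear_combination ε * hlm
      exact_mod_cast hb.trans (le_of_eq heq)
    have hle : lqSpectrumE ν t ≤ ((l * g1 + m * g2 + ε : ℝ) : EReal) :=
      Filter.limsup_le_of_le (h := ev)
    exact_mod_cast le_trans hbt hle
  have hfin : t ≤ l * g1 + m * g2 := le_of_forall_pos_le_add main
  have hmul := mul_le_mul_of_nonneg_right hfin hq21.le
  calc t * (q2 - q1) ≤ (l * g1 + m * g2) * (q2 - q1) := hmul
    _ = g1 * (q2 - t) + g2 * (t - q1) := by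
        rw [hldef, hmdef]
        field_simp

lemma exists_alpha (hν : ν (Set.Ioc 0 1) = 1) {qbar t : ℝ}
    (hq0 : 0 ≤ qbar) (hq1 : qbar ≤ 1)
    (hsep : ∀ q : ℝ, 0 < q → q < qbar → ((q : ℝ) : EReal) < lqSpectrumE ν q)
    (ht : t < qbar) :
    ∃ α : ℝ, 0 ≤ α ∧ ∀ q : ℝ,
      ((t * (1 + α) : ℝ) : EReal) ≤ lqSpectrumE ν q + ((α * q : ℝ) : EReal) := by
  have ht1 : t < 1 := lt_of_lt_of_le ht hq1
  have hbt : ((t : ℝ) : EReal) ≤ lqSpectrumE ν t := by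
    rcases le_or_gt t 0 with h0 | h0
    · refine le_trans ?_ (lq_nonneg hν (by linarith : t ≤ 1))
      exact_mod_cast h0
    · exact (hsep t h0 ht).le
  set g : ℝ → ℝ := fun q => (lqSpectrumE ν q).toReal with hgdef
  set P : Set ℝ := {q | t < q ∧ lqSpectrumE ν q ≠ ⊤} with hPdef
  set W : Set ℝ := (fun q => (t - g q) / (q - t)) '' P with hWdef
  have h1P : (1:ℝ) ∈ P := by
    refine ⟨ht1, ?_⟩
    rw [lq_one hν]
    exact EReal.zero_ne_top
  have hne : W.Nonempty := ⟨_, Set.mem_image_of_mem _ h1P⟩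
  have hB : ∀ x ∈ W, x ≤ max 1 ((t + qbar) / (qbar - t)) := by
    rintro x ⟨q, ⟨hq, hqtop⟩, rfl⟩
    have hqt : (0:ℝ) < q - t := by linarith
    have hgq : ((g q : ℝ) : EReal) = lqSpectrumE ν q :=
      EReal.coe_toReal hqtop (lq_ne_bot hν q)
    rcases lt_or_ge q qbar with hlt | hge
    · rcases le_or_gt q 0 with hq0 | hq0
      · have hg0 : 0 ≤ g q := gq_nonneg hν (by linarith) hqtop
        have : (t - g q) / (q - t) ≤ 0 :=
          div_nonpos_of_nonpos_of_nonneg (by linarith) hqt.le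
        exact le_trans this (le_trans zero_le_one (le_max_left _ _))
      · have hlt2 : ((q : ℝ) : EReal) < lqSpectrumE ν q := hsep q hq0 hlt
        rw [← hgq] at hlt2
        have hqg : q < g q := by exact_mod_cast hlt2
        have : (t - g q) / (q - t) ≤ 0 :=
          div_nonpos_of_nonpos_of_nonneg (by linarith) hqt.le
        exact le_trans this (le_trans zero_le_one (le_max_left _ _))
    · have hq0 : (0:ℝ) ≤ q := le_trans hq0 hge
      have hgg : -q ≤ g q := by
        have h := lq_ge hν q
        rw [max_eq_left hq0, ← hgq] at h
        exact_mod_cast h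
      have h1 : (t - g q) / (q - t) ≤ (t + q) / (q - t) := by
        gcongr
        linarith
      rcases le_or_gt t 0 with ht0 | ht0
      · have h2 : (t + q) / (q - t) ≤ 1 := by
          rw [div_le_one hqt]
          linarith
        exact le_trans h1 (le_trans h2 (le_max_left _ _))
      · have hqbt : (0:ℝ) < qbar - t := by linarith
        have h2 : (t + q) / (q - t) ≤ (t + qbar) / (qbar - t) := by
          rw [div_le_div_iff₀ hqt hqbt]
          nlinarith
        exact le_trans h1 (le_trans h2 (le_max_right _ _))
  have hbddA : BddAbove W := ⟨_, fun x hx => hB x hx⟩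
  set A := sSup W with hAdef
  have hA1 : t / (1 - t) ≤ A := by
    have hg1 : g 1 = 0 := by
      rw [hgdef]
      simp only
      rw [lq_one hν]
      rfl
    have h := le_csSup hbddA (Set.mem_image_of_mem _ h1P)
    rw [hg1] at h
    simpa using h
  set α := max A 0 with hαdef
  refine ⟨α, le_max_right _ _, ?_⟩
  intro q
  rcases eq_or_ne (lqSpectrumE ν q) ⊤ with htop | hreal
  · rw [htop, EReal.top_add_coe]
    exact le_top
  · have hgq : ((g q : ℝ) : EReal) = lqSpectrumE ν q :=
      EReal.coe_toReal hreal (lq_ne_bot hν q)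
    rw [← hgq, ← EReal.coe_add, EReal.coe_le_coe_iff]
    rcases lt_trichotomy t q with hlt | heq | hgt
    · have hqP : q ∈ P := ⟨hlt, hreal⟩
      have hle : (t - g q) / (q - t) ≤ A := le_csSup hbddA (Set.mem_image_of_mem _ hqP)
      have hle2 : (t - g q) / (q - t) ≤ α := le_trans hle (le_max_left _ _)
      have hqt : (0:ℝ) < q - t := by linarith
      rw [div_le_iff₀ hqt] at hle2
      nlinarith
    · subst heq
      have htg : t ≤ g t := by
        rw [← hgq] at hbt
        exact_mod_cast hbt
      nlinarith
    · rcases le_or_gt A 0 with hA0 | hA0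
      · have hα : α = 0 := max_eq_right hA0
        have ht0 : t ≤ 0 := by
          rcases le_or_gt t 0 with h | h
          · exact h
          · exfalso
            have : (0:ℝ) < t / (1 - t) := div_pos h (by linarith)
            linarith [le_trans hA1 hA0]
        have hgq0 : 0 ≤ g q := gq_nonneg hν (by linarith : q ≤ 1) hreal
        rw [hα]
        nlinarith
      · have hα : α = A := max_eq_left hA0.le
        have htq : (0:ℝ) < t - q := by linarith
        have hub : A ≤ (g q - t) / (t - q) := by
          apply csSup_le hne
          rintro x ⟨q2, ⟨hq2, hq2top⟩, rfl⟩
          have hch := chord hν hgt hq2 hreal hq2top hbt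
          rw [div_le_div_iff₀ (by linarith : (0:ℝ) < q2 - t) htq]
          nlinarith
        rw [le_div_iff₀ htq] at hub
        rw [hα]
        nlinarith

end Stmt9Aux

open Stmt9Aux Filter

/-- The fixed point `q̄_ν = inf{q > 0 : β_ν(q) ≤ q}` equals
`sup_{α ≥ 0} β̂_ν(α)/(1+α)`. -/
theorem stmt9 (ν : Measure ℝ) [IsProbabilityMeasure ν] (hν : ν (Set.Ioc 0 1) = 1)
    (qbar : ℝ)
    (hqbar : qbar = sInf {q : ℝ | 0 < q ∧ lqSpectrumE ν q ≤ ((q : ℝ) : EReal)}) :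
    ((qbar : ℝ) : EReal) =
      ⨆ α : {a : ℝ // 0 ≤ a}, legendre ν α / ((1 : EReal) + ((α : ℝ) : EReal)) := by
  set S : Set ℝ := {q : ℝ | 0 < q ∧ lqSpectrumE ν q ≤ ((q : ℝ) : EReal)} with hSdef
  have h1S : (1:ℝ) ∈ S := by
    refine ⟨one_pos, ?_⟩
    rw [lq_one hν]
    exact_mod_cast (zero_le_one : (0:ℝ) ≤ 1)
  have hbdd : BddBelow S := ⟨0, fun q hq => hq.1.le⟩
  have hq0 : 0 ≤ qbar := by
    rw [hqbar]
    exact le_csInf ⟨1, h1S⟩ (fun q hq => hq.1.le)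
  have hq1 : qbar ≤ 1 := by
    rw [hqbar]
    exact csInf_le hbdd h1S
  have hsep : ∀ q : ℝ, 0 < q → q < qbar → ((q : ℝ) : EReal) < lqSpectrumE ν q := by
    intro q hqpos hqlt
    by_contra hcon
    push_neg at hcon
    have hmem : q ∈ S := ⟨hqpos, hcon⟩
    have := csInf_le hbdd hmem
    rw [← hqbar] at this
    linarith
  have hcoe : ∀ α : ℝ, ((1 : EReal) + ((α : ℝ) : EReal)) = ((1 + α : ℝ) : EReal) := by
    intro α
    norm_cast
  apply le_antisymm
  · by_contra hcon
    push_neg at hcon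
    obtain ⟨t, hts, htq⟩ :=
      EReal.exists_between_coe_real hcon
    have ht : t < qbar := by exact_mod_cast htq
    obtain ⟨α, hα0, hkey⟩ := exists_alpha hν hq0 hq1 hsep ht
    have hleg : ((t * (1 + α) : ℝ) : EReal) ≤ legendre ν α := le_iInf hkey
    have hpos : (0:EReal) < ((1 + α : ℝ) : EReal) := by
      exact_mod_cast (by linarith : (0:ℝ) < 1 + α)
    have hdiv : ((t : ℝ) : EReal) ≤ legendre ν α / ((1 + α : ℝ) : EReal) := by
      rw [EReal.le_div_iff_mul_le hpos (EReal.coe_ne_top _)]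
      calc ((t : ℝ) : EReal) * ((1 + α : ℝ) : EReal) = ((t * (1 + α) : ℝ) : EReal) := by
            rw [← EReal.coe_mul]
        _ ≤ legendre ν α := hleg
    have hsup : legendre ν α / ((1 + α : ℝ) : EReal)
        ≤ ⨆ β : {a : ℝ // 0 ≤ a}, legendre ν β / ((1 : EReal) + ((β : ℝ) : EReal)) := by
      have := le_iSup (fun β : {a : ℝ // 0 ≤ a} =>
        legendre ν β / ((1 : EReal) + ((β : ℝ) : EReal))) ⟨α, hα0⟩
      rwa [hcoe α] at this
    exact absurd (lt_of_le_of_lt (le_trans hdiv hsup) hts) (lt_irrefl _)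
  · apply iSup_le
    rintro ⟨α, hα0⟩
    simp only
    by_contra hcon
    push_neg at hcon
    obtain ⟨r, hr1, hr2⟩ := EReal.exists_between_coe_real hcon
    have hqr : qbar < r := by exact_mod_cast hr1
    have hsInf : sInf S < r := by rw [← hqbar]; exact hqr
    obtain ⟨q, hqS, hqr2⟩ := exists_lt_of_csInf_lt ⟨1, h1S⟩ hsInf
    have hle1 : legendre ν α ≤ lqSpectrumE ν q + ((α * q : ℝ) : EReal) := iInf_le _ q
    have hle2 : lqSpectrumE ν q + ((α * q : ℝ) : EReal) ≤ ((q * (1 + α) : ℝ) : EReal) := by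
      calc lqSpectrumE ν q + ((α * q : ℝ) : EReal)
          ≤ ((q : ℝ) : EReal) + ((α * q : ℝ) : EReal) := add_le_add hqS.2 le_rfl
        _ = ((q * (1 + α) : ℝ) : EReal) := by
            rw [← EReal.coe_add]
            norm_cast
            ring
    have hdiv : legendre ν α / ((1 + α : ℝ) : EReal) ≤ ((q : ℝ) : EReal) := by
      have h := EReal.div_le_div_right_of_nonneg
        (by exact_mod_cast (by linarith : (0:ℝ) ≤ 1 + α) : (0:EReal) ≤ ((1 + α : ℝ) : EReal))
        (le_trans hle1 hle2)
      rwa [← EReal.coe_div, mul_div_cancel_right₀ q (by linarith : (1:ℝ) + α ≠ 0)] at h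
    rw [hcoe α] at hcon
    have : ((r : ℝ) : EReal) < ((q : ℝ) : EReal) := lt_of_lt_of_le hr2 (by rwa [hcoe α])
    have : r < q := by exact_mod_cast this
    linarith
end

section
/- Let ν be a Borel probability measure on (0,1] with a nonzero absolutely continuous part with density ρ ≥ 0 (ρ not a.e. zero). Then for every q ∈ (0,1) and every n, (1/(n log 2)) log Σ_{C∈D_{ν,n}} ν(C)^q ≥ (1/(n log 2)) log ∫_{[0,1]} ρ^q dΛ + 1 − q; consequently β_ν(q) = lim_n β_n(q) = 1 − q for all q ∈ [0,1]. -/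
open MeasureTheory
open scoped Classical

section AuxStmt10

lemma dyadic_meas (n k : ℕ) : MeasurableSet (dyadic n k) := measurableSet_Ioc

lemma dyadic_subset {n k : ℕ} (hk : k < 2 ^ n) : dyadic n k ⊆ Set.Ioc (0:ℝ) 1 := by
  rintro x ⟨h1, h2⟩
  refine ⟨lt_of_le_of_lt (by positivity) h1, h2.trans ?_⟩
  rw [div_le_one (by positivity)]
  have : (k:ℝ) + 1 ≤ ((2^n : ℕ):ℝ) := by exact_mod_cast hk
  simpa using this

lemma dyadic_disjoint_of_lt {n k l : ℕ} (h : k < l) : Disjoint (dyadic n k) (dyadic n l) := by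
  rw [dyadic, dyadic, Set.Ioc_disjoint_Ioc]
  refine le_trans (min_le_left _ _) (le_trans ?_ (le_max_right _ _))
  gcongr
  exact_mod_cast h

lemma dyadic_pd (n : ℕ) : (↑(Finset.range (2^n)) : Set ℕ).PairwiseDisjoint (dyadic n) := by
  intro k _ l _ hkl
  rcases lt_or_gt_of_ne hkl with h | h
  · exact dyadic_disjoint_of_lt h
  · exact (dyadic_disjoint_of_lt h).symm

lemma dyadic_iUnion (n : ℕ) : ⋃ k ∈ Finset.range (2^n), dyadic n k = Set.Ioc (0:ℝ) 1 := by
  apply Set.Subset.antisymm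
  · intro x hx
    simp only [Set.mem_iUnion] at hx
    obtain ⟨k, hk, hx⟩ := hx
    exact dyadic_subset (Finset.mem_range.mp hk) hx
  · rintro x ⟨hx0, hx1⟩
    have h2 : (0:ℝ) < 2 ^ n := by positivity
    have hxpos : 0 < x * 2 ^ n := by positivity
    set m := ⌈x * 2 ^ n⌉₊ with hm
    have hm1 : 1 ≤ m := by
      rw [hm, Nat.one_le_ceil_iff]; exact hxpos
    have hmN : m ≤ 2^n := Nat.ceil_le.mpr (by
      push_cast
      nlinarith)
    simp only [Set.mem_iUnion, dyadic, Set.mem_Ioc, Finset.mem_range]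
    refine ⟨m - 1, by omega, ?_, ?_⟩
    · rw [div_lt_iff₀ h2]
      have hcast : ((m - 1 : ℕ) : ℝ) = (m:ℝ) - 1 := by
        push_cast [hm1]; ring
      rw [hcast]
      have := Nat.ceil_lt_add_one (le_of_lt hxpos)
      rw [← hm] at this
      linarith
    · rw [le_div_iff₀ h2]
      have hcast : ((m - 1 : ℕ) : ℝ) + 1 = (m:ℝ) := by
        push_cast [hm1]; ring
      rw [hcast]
      exact Nat.le_ceil _

lemma sum_dyadic_measure (μ : Measure ℝ) (n : ℕ) :
    ∑ k ∈ Finset.range (2^n), μ (dyadic n k) = μ (Set.Ioc 0 1) := by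
  rw [← dyadic_iUnion n, measure_biUnion_finset (dyadic_pd n) (fun k _ => measurableSet_Ioc)]

lemma sum_dyadic_lintegral (g : ℝ → ENNReal) (hg : Measurable g) (n : ℕ) :
    ∑ k ∈ Finset.range (2^n), ∫⁻ x in dyadic n k, g x = ∫⁻ x in Set.Ioc 0 1, g x := by
  have e : ∀ s : Set ℝ, MeasurableSet s → (volume.withDensity g) s = ∫⁻ x in s, g x :=
    fun s hs => withDensity_apply g hs
  have h := sum_dyadic_measure (volume.withDensity g) n
  rw [e _ measurableSet_Ioc] at h
  rw [← h]
  exact Finset.sum_congr rfl (fun k _ => (e _ measurableSet_Ioc).symm)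

lemma dyadic_volume (n k : ℕ) : volume (dyadic n k) = ENNReal.ofReal (((2:ℝ)^n)⁻¹) := by
  rw [dyadic, Real.volume_Ioc]
  congr 1
  field_simp
  ring

lemma holder_cell {q : ℝ} (hq : 0 < q) (hq1 : q ≤ 1) (g : ℝ → ENNReal) (hg : Measurable g)
    (s : Set ℝ) :
    ∫⁻ x in s, g x ^ q ≤ (∫⁻ x in s, g x) ^ q * volume s ^ (1 - q) := by
  rcases eq_or_lt_of_le hq1 with rfl | hq1
  · simp [ENNReal.rpow_one]
  have hpq : (1/q).HolderConjugate (1/(1-q)) := by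
    rw [Real.holderConjugate_iff]
    constructor
    · rw [lt_div_iff₀ hq]; linarith
    · rw [one_div, one_div, inv_inv, inv_inv]; ring
  have h := ENNReal.lintegral_mul_le_Lp_mul_Lq (volume.restrict s) hpq
      (f := fun x => g x ^ q) (g := fun _ => 1) ((hg.pow_const q).aemeasurable)
      aemeasurable_const
  simp only [Pi.mul_apply, mul_one, ENNReal.one_rpow, lintegral_one,
    Measure.restrict_apply MeasurableSet.univ, Set.univ_inter, one_div_one_div] at h
  calc ∫⁻ x in s, g x ^ q ≤ (∫⁻ x in s, (g x ^ q) ^ (1/q)) ^ q * volume s ^ (1 - q) := h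
    _ = (∫⁻ x in s, g x) ^ q * volume s ^ (1 - q) := by
        congr 1
        congr 1
        refine lintegral_congr fun x => ?_
        rw [← ENNReal.rpow_mul, mul_one_div_cancel hq.ne', ENNReal.rpow_one]

section
variable {ν : Measure ℝ} [IsProbabilityMeasure ν] {ρ : ℝ → ℝ}

noncomputable def Snq (ν : Measure ℝ) (n : ℕ) (q : ℝ) : ℝ :=
  ∑ k ∈ (Finset.range (2 ^ n)).filter (fun k => ν (dyadic n k) ≠ 0),
      ((ν (dyadic n k)).toReal) ^ q

lemma lint_eq_int {q : ℝ} (hq : 0 ≤ q) (hρmeas : Measurable ρ) (hρ0 : ∀ x, 0 ≤ ρ x) :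
    (∫⁻ x in Set.Ioc (0:ℝ) 1, ENNReal.ofReal (ρ x) ^ q).toReal
      = ∫ x in Set.Icc (0:ℝ) 1, ρ x ^ q := by
  rw [integral_Icc_eq_integral_Ioc]
  rw [integral_eq_lintegral_of_nonneg_ae
    (Filter.Eventually.of_forall fun x => Real.rpow_nonneg (hρ0 x) q)
    ((hρmeas.pow_const q).aestronglyMeasurable)]
  congr 1
  refine lintegral_congr fun x => ?_
  rw [ENNReal.ofReal_rpow_of_nonneg (hρ0 x) hq]

lemma key_lower (hν : ν (Set.Ioc 0 1) = 1) (hρmeas : Measurable ρ) (hρ0 : ∀ x, 0 ≤ ρ x)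
    (hρint : IntegrableOn ρ (Set.Icc 0 1))
    (hac : ∀ s : Set ℝ, MeasurableSet s → ENNReal.ofReal (∫ x in s, ρ x) ≤ ν s)
    {q : ℝ} (hq : 0 < q) (hq1 : q ≤ 1) (n : ℕ) :
    (2:ℝ) ^ ((n:ℝ) * (1 - q)) * ∫ x in Set.Icc (0:ℝ) 1, ρ x ^ q ≤ Snq ν n q := by
  set g : ℝ → ENNReal := fun x => ENNReal.ofReal (ρ x) with hgdef
  have hg : Measurable g := hρmeas.ennreal_ofReal
  set J : ENNReal := ∫⁻ x in Set.Ioc (0:ℝ) 1, g x ^ q with hJ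
  set w : ENNReal := ENNReal.ofReal (((2:ℝ)^n)⁻¹) ^ (1 - q) with hw
  set T : ENNReal := ∑ k ∈ Finset.range (2 ^ n), ν (dyadic n k) ^ q with hT
  -- cell bound
  have cell : ∀ k ∈ Finset.range (2^n),
      ∫⁻ x in dyadic n k, g x ^ q ≤ ν (dyadic n k) ^ q * w := by
    intro k hk
    have hsub : dyadic n k ⊆ Set.Icc (0:ℝ) 1 :=
      (dyadic_subset (Finset.mem_range.mp hk)).trans Set.Ioc_subset_Icc_self
    have hint : IntegrableOn ρ (dyadic n k) := hρint.mono_set hsub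
    have hL : ∫⁻ x in dyadic n k, g x ≤ ν (dyadic n k) := by
      rw [hgdef, ← ofReal_integral_eq_lintegral_ofReal hint
        (Filter.Eventually.of_forall fun x => hρ0 x)]
      exact hac _ (dyadic_meas n k)
    calc ∫⁻ x in dyadic n k, g x ^ q
        ≤ (∫⁻ x in dyadic n k, g x) ^ q * volume (dyadic n k) ^ (1 - q) :=
          holder_cell hq hq1 g hg _
      _ ≤ ν (dyadic n k) ^ q * w := by
          rw [dyadic_volume, ← hw]
          exact mul_le_mul_left (ENNReal.rpow_le_rpow hL hq.le) w
  -- sum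
  have hsum : J ≤ T * w := by
    rw [hJ, ← sum_dyadic_lintegral (fun x => g x ^ q) (hg.pow_const q) n, hT,
      Finset.sum_mul]
    exact Finset.sum_le_sum cell
  have hw0 : w ≠ 0 := by
    rw [hw, ENNReal.ofReal_rpow_of_pos (by positivity)]
    simp only [ne_eq, ENNReal.ofReal_eq_zero, not_le]
    positivity
  have hwt : w ≠ ⊤ := by
    rw [hw, ENNReal.ofReal_rpow_of_pos (by positivity)]
    exact ENNReal.ofReal_ne_top
  have hdiv : J / w ≤ T := (ENNReal.div_le_iff_le_mul (Or.inl hw0) (Or.inl hwt)).mpr hsum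
  have hTne : T ≠ ⊤ := by
    rw [hT]
    refine (ENNReal.sum_lt_top.mpr fun k _ => ?_).ne
    exact (ENNReal.rpow_ne_top_of_nonneg hq.le (measure_ne_top ν _)).lt_top
  have hreal : (J / w).toReal ≤ T.toReal := ENNReal.toReal_mono hTne hdiv
  -- identify T.toReal with Snq
  have hTS : T.toReal = Snq ν n q := by
    rw [hT, ← Finset.sum_filter_of_ne (p := fun k => ν (dyadic n k) ≠ 0)
      (by intro k _ h hk0; rw [hk0] at h; exact h (ENNReal.zero_rpow_of_pos hq))]
    rw [ENNReal.toReal_sum (fun k _ => ENNReal.rpow_ne_top_of_nonneg hq.le (measure_ne_top ν _))]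
    exact Finset.sum_congr rfl fun k _ => (ENNReal.toReal_rpow _ _).symm
  -- identify (J/w).toReal
  have hwr : w.toReal = ((2:ℝ) ^ ((n:ℝ) * (1 - q)))⁻¹ := by
    rw [hw, ENNReal.ofReal_rpow_of_pos (by positivity), ENNReal.toReal_ofReal (by positivity)]
    rw [← Real.rpow_natCast (2:ℝ) n, ← Real.rpow_neg_one ((2:ℝ) ^ (n:ℝ)),
      ← Real.rpow_mul (by norm_num), ← Real.rpow_mul (by norm_num),
      ← Real.rpow_neg_one ((2:ℝ) ^ ((n:ℝ) * (1 - q))), ← Real.rpow_mul (by norm_num)]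
    ring_nf
  have hJw : (J / w).toReal = (2:ℝ) ^ ((n:ℝ) * (1 - q)) * ∫ x in Set.Icc (0:ℝ) 1, ρ x ^ q := by
    rw [ENNReal.toReal_div, hwr, division_def, inv_inv, hJ, lint_eq_int hq.le hρmeas hρ0, mul_comm]
  rw [← hJw, ← hTS]
  exact hreal

lemma rpow_le_one_add {a q : ℝ} (ha : 0 ≤ a) (hq0 : 0 ≤ q) (hq1 : q ≤ 1) : a ^ q ≤ 1 + a := by
  rcases le_total a 1 with h | h
  · have := Real.rpow_le_one ha h hq0; linarith
  · have h2 : a ^ q ≤ a ^ (1:ℝ) :=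
      Real.rpow_le_rpow_of_exponent_le h hq1
    rw [Real.rpow_one] at h2; linarith

lemma Iq_int {q : ℝ} (hq0 : 0 ≤ q) (hq1 : q ≤ 1) (hρmeas : Measurable ρ) (hρ0 : ∀ x, 0 ≤ ρ x)
    (hρint : IntegrableOn ρ (Set.Icc 0 1)) :
    IntegrableOn (fun x => ρ x ^ q) (Set.Icc (0:ℝ) 1) := by
  have hc : IntegrableOn (fun _ : ℝ => (1:ℝ)) (Set.Icc (0:ℝ) 1) := by
    refine (integrableOn_const_iff (C := (1:ℝ)) (by simp)).mpr (Or.inr ?_)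
    rw [Real.volume_Icc]; exact ENNReal.ofReal_lt_top
  refine Integrable.mono' (hc.add hρint) ((hρmeas.pow_const q).aestronglyMeasurable) ?_
  refine Filter.Eventually.of_forall fun x => ?_
  rw [Real.norm_eq_abs, abs_of_nonneg (Real.rpow_nonneg (hρ0 x) q)]
  exact rpow_le_one_add (hρ0 x) hq0 hq1

lemma Iq_pos (hρmeas : Measurable ρ) (hρ0 : ∀ x, 0 ≤ ρ x)
    (hρint : IntegrableOn ρ (Set.Icc 0 1))
    (hρpos : 0 < ∫ x in Set.Icc (0:ℝ) 1, ρ x)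
    {q : ℝ} (hq : 0 < q) (hq1 : q ≤ 1) :
    0 < ∫ x in Set.Icc (0:ℝ) 1, ρ x ^ q := by
  rcases (setIntegral_nonneg measurableSet_Icc fun x _ => Real.rpow_nonneg (hρ0 x) q).lt_or_eq
    with h | h
  · exact h
  · exfalso
    have h0 : (fun x => ρ x ^ q) =ᵐ[volume.restrict (Set.Icc (0:ℝ) 1)] 0 :=
      (integral_eq_zero_iff_of_nonneg_ae
        (Filter.Eventually.of_forall fun x => Real.rpow_nonneg (hρ0 x) q)
        (Iq_int hq.le hq1 hρmeas hρ0 hρint)).mp h.symm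
    have hρ0' : ρ =ᵐ[volume.restrict (Set.Icc (0:ℝ) 1)] 0 := by
      refine h0.mono fun x hx => ?_
      rcases (hρ0 x).lt_or_eq with hlt | heq
      · exact absurd hx (by simp [(Real.rpow_pos_of_pos hlt q).ne'])
      · exact heq.symm
    have : ∫ x in Set.Icc (0:ℝ) 1, ρ x = 0 := by
      rw [integral_congr_ae hρ0']; simp
    linarith

lemma Snq_anti (n : ℕ) {q q' : ℝ} (hqq' : q ≤ q') :
    Snq ν n q' ≤ Snq ν n q := by
  refine Finset.sum_le_sum fun k hk => ?_
  have hne := (Finset.mem_filter.mp hk).2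
  have hpos : 0 < (ν (dyadic n k)).toReal := ENNReal.toReal_pos hne (measure_ne_top ν _)
  have hle1 : (ν (dyadic n k)).toReal ≤ 1 := by
    have h := prob_le_one (μ := ν) (s := dyadic n k)
    simpa using ENNReal.toReal_mono ENNReal.one_ne_top h
  exact Real.rpow_le_rpow_of_exponent_ge hpos hle1 hqq'

lemma key_upper (hν : ν (Set.Ioc 0 1) = 1) (n : ℕ) {q : ℝ} (hq0 : 0 ≤ q) (hq1 : q ≤ 1) :
    Snq ν n q ≤ 2 * (2:ℝ) ^ ((n:ℝ) * (1 - q)) := by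
  set F := (Finset.range (2 ^ n)).filter (fun k => ν (dyadic n k) ≠ 0) with hF
  set b : ℝ := (2:ℝ) ^ (-(n:ℝ)) with hb
  have hbpos : 0 < b := Real.rpow_pos_of_pos (by norm_num) _
  have key : ∀ a : ℝ, 0 ≤ a → a ^ q ≤ b ^ (q - 1) * a + b ^ q := by
    intro a ha
    rcases le_total a b with h | h
    · have h1 : a ^ q ≤ b ^ q := Real.rpow_le_rpow ha h hq0
      have h2 : 0 ≤ b ^ (q-1) * a := mul_nonneg (Real.rpow_nonneg hbpos.le _) ha
      linarith
    · have hapos : 0 < a := lt_of_lt_of_le hbpos h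
      have h1 : a ^ (q - 1) ≤ b ^ (q - 1) :=
        Real.rpow_le_rpow_of_nonpos hbpos h (by linarith)
      have h3 : a ^ q = a * a ^ (q - 1) := by
        rw [show q = 1 + (q-1) by ring, Real.rpow_add hapos, Real.rpow_one]; norm_num
      have h4 : 0 ≤ b ^ q := (Real.rpow_nonneg hbpos.le _)
      calc a ^ q = a * a ^ (q-1) := h3
        _ ≤ a * b ^ (q-1) := by
            exact mul_le_mul_of_nonneg_left h1 hapos.le
        _ = b ^ (q-1) * a := by ring
        _ ≤ b ^ (q-1) * a + b ^ q := by linarith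
  have hsumν : ∑ k ∈ F, ν (dyadic n k) ≤ 1 := by
    calc ∑ k ∈ F, ν (dyadic n k) ≤ ∑ k ∈ Finset.range (2^n), ν (dyadic n k) :=
          Finset.sum_le_sum_of_subset (Finset.filter_subset _ _)
      _ = ν (Set.Ioc 0 1) := sum_dyadic_measure ν n
      _ = 1 := hν
  have hsum1 : ∑ k ∈ F, (ν (dyadic n k)).toReal ≤ 1 := by
    calc ∑ k ∈ F, (ν (dyadic n k)).toReal = (∑ k ∈ F, ν (dyadic n k)).toReal :=
          (ENNReal.toReal_sum (fun k _ => measure_ne_top ν _)).symm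
      _ ≤ (1:ENNReal).toReal := ENNReal.toReal_mono ENNReal.one_ne_top hsumν
      _ = 1 := by simp
  have hcard : (F.card : ℝ) ≤ (2:ℝ) ^ n := by
    have h : F.card ≤ 2^n := (Finset.card_filter_le (Finset.range (2^n)) _).trans_eq (Finset.card_range _)
    calc (F.card : ℝ) ≤ ((2^n : ℕ) : ℝ) := Nat.cast_le.mpr h
      _ = (2:ℝ) ^ n := by push_cast; ring
  have e1 : b ^ (q-1) = (2:ℝ) ^ ((n:ℝ) * (1 - q)) := by
    rw [hb, ← Real.rpow_mul (by norm_num)]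
    congr 1; ring
  have e2 : b ^ q * (2:ℝ) ^ n = (2:ℝ) ^ ((n:ℝ) * (1 - q)) := by
    rw [hb, ← Real.rpow_mul (by norm_num), ← Real.rpow_natCast (2:ℝ) n,
      ← Real.rpow_add (by norm_num)]
    congr 1; ring
  have h4 : 0 ≤ b ^ q := (Real.rpow_nonneg hbpos.le _)
  have hb1 : 0 ≤ b ^ (q-1) := (Real.rpow_nonneg hbpos.le _)
  calc Snq ν n q ≤ ∑ k ∈ F, (b ^ (q-1) * (ν (dyadic n k)).toReal + b ^ q) :=
        Finset.sum_le_sum fun k _ => key _ ENNReal.toReal_nonneg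
    _ = b^(q-1) * (∑ k ∈ F, (ν (dyadic n k)).toReal) + b^q * F.card := by
        rw [Finset.sum_add_distrib, Finset.sum_const, nsmul_eq_mul, ← Finset.mul_sum]; ring
    _ ≤ b^(q-1) * 1 + b^q * ((2:ℝ)^n) :=
        add_le_add (mul_le_mul_of_nonneg_left hsum1 hb1) (mul_le_mul_of_nonneg_left hcard h4)
    _ = 2 * (2:ℝ) ^ ((n:ℝ) * (1 - q)) := by rw [mul_one, e1, e2]; ring

lemma betan_eq (ν : Measure ℝ) (n : ℕ) (q : ℝ) :
    betan ν n q = (1 / ((n : ℝ) * Real.log 2)) * Real.log (Snq ν n q) := rfl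

variable {ν : Measure ℝ} [IsProbabilityMeasure ν] {ρ : ℝ → ℝ}

lemma Snq_nonneg (ν : Measure ℝ) (n : ℕ) (q : ℝ) : 0 ≤ Snq ν n q :=
  Finset.sum_nonneg fun k _ => Real.rpow_nonneg ENNReal.toReal_nonneg q

lemma log_Snq_ge (hν : ν (Set.Ioc 0 1) = 1) (hρmeas : Measurable ρ) (hρ0 : ∀ x, 0 ≤ ρ x)
    (hρint : IntegrableOn ρ (Set.Icc 0 1))
    (hρpos : 0 < ∫ x in Set.Icc (0:ℝ) 1, ρ x)
    (hac : ∀ s : Set ℝ, MeasurableSet s → ENNReal.ofReal (∫ x in s, ρ x) ≤ ν s)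
    {q : ℝ} (hq : 0 < q) (hq1 : q ≤ 1) {n : ℕ} (hn : 1 ≤ n) :
    (1/((n:ℝ)*Real.log 2)) * Real.log (∫ x in Set.Icc (0:ℝ) 1, ρ x ^ q) + (1 - q)
      ≤ (1/((n:ℝ)*Real.log 2)) * Real.log (Snq ν n q) := by
  have hn0 : (0:ℝ) < n := by exact_mod_cast hn
  have hl2 : (0:ℝ) < Real.log 2 := Real.log_pos one_lt_two
  have hc : (0:ℝ) < (n:ℝ)*Real.log 2 := mul_pos hn0 hl2
  have hI := Iq_pos hρmeas hρ0 hρint hρpos hq hq1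
  have hA := key_lower hν hρmeas hρ0 hρint hac hq hq1 n
  have hS : 0 < Snq ν n q := lt_of_lt_of_le (by positivity) hA
  have hlog : Real.log ((2:ℝ)^((n:ℝ)*(1-q)) * ∫ x in Set.Icc (0:ℝ) 1, ρ x ^ q)
      ≤ Real.log (Snq ν n q) := Real.log_le_log (by positivity) hA
  rw [Real.log_mul (by positivity) hI.ne', Real.log_rpow (by norm_num)] at hlog
  have hmul := mul_le_mul_of_nonneg_left hlog (le_of_lt (one_div_pos.mpr hc))
  have hexp : (1/((n:ℝ)*Real.log 2)) * ((((n:ℝ)*(1-q))) * Real.log 2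
        + Real.log (∫ x in Set.Icc (0:ℝ) 1, ρ x ^ q))
      = (1/((n:ℝ)*Real.log 2))*Real.log (∫ x in Set.Icc (0:ℝ) 1, ρ x ^ q) + (1-q) := by
    field_simp
    ring
  linarith [hexp ▸ hmul]

lemma betan_le_aux (hν : ν (Set.Ioc 0 1) = 1) {q : ℝ} (hq0 : 0 ≤ q) (hq1 : q ≤ 1)
    {n : ℕ} (hn : 1 ≤ n) : betan ν n q ≤ 1 - q + 1/n := by
  have hn0 : (0:ℝ) < n := by exact_mod_cast hn
  have hl2 : (0:ℝ) < Real.log 2 := Real.log_pos one_lt_two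
  have hc : (0:ℝ) < (n:ℝ)*Real.log 2 := mul_pos hn0 hl2
  rw [betan_eq]
  rcases (Snq_nonneg ν n q).eq_or_lt with h | h
  · rw [← h, Real.log_zero, mul_zero]
    have : (0:ℝ) < 1/n := by positivity
    linarith
  · have hub := key_upper hν n hq0 hq1
    have hlog : Real.log (Snq ν n q) ≤ Real.log (2 * (2:ℝ)^((n:ℝ)*(1-q))) :=
      Real.log_le_log h hub
    rw [Real.log_mul (by norm_num) (by positivity), Real.log_rpow (by norm_num)] at hlog
    have hmul := mul_le_mul_of_nonneg_left hlog (le_of_lt (one_div_pos.mpr hc))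
    have hexp : (1/((n:ℝ)*Real.log 2)) * (Real.log 2 + ((n:ℝ)*(1-q)) * Real.log 2)
        = 1/n + (1-q) := by
      field_simp
    linarith [hexp ▸ hmul]

lemma tendsto_betan (hν : ν (Set.Ioc 0 1) = 1) (hρmeas : Measurable ρ) (hρ0 : ∀ x, 0 ≤ ρ x)
    (hρint : IntegrableOn ρ (Set.Icc 0 1))
    (hρpos : 0 < ∫ x in Set.Icc (0:ℝ) 1, ρ x)
    (hac : ∀ s : Set ℝ, MeasurableSet s → ENNReal.ofReal (∫ x in s, ρ x) ≤ ν s)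
    {q : ℝ} (hq0 : 0 ≤ q) (hq1 : q ≤ 1) :
    Filter.Tendsto (fun n => betan ν n q) Filter.atTop (nhds (1 - q)) := by
  rw [Metric.tendsto_atTop]
  intro ε hε
  set q' : ℝ := min 1 (q + ε/4) with hq'def
  have hq'pos : 0 < q' := lt_min one_pos (by linarith)
  have hq'le1 : q' ≤ 1 := min_le_left _ _
  have hqq' : q ≤ q' := le_min hq1 (by linarith)
  have hq'q : q' ≤ q + ε/4 := min_le_right _ _
  set L : ℝ := Real.log (∫ x in Set.Icc (0:ℝ) 1, ρ x ^ q') with hL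
  have hlim : Filter.Tendsto (fun n : ℕ => (1/((n:ℝ)*Real.log 2)) * L) Filter.atTop (nhds 0) := by
    have h1 : Filter.Tendsto (fun n : ℕ => (1:ℝ)/n) Filter.atTop (nhds 0) :=
      tendsto_one_div_atTop_nhds_zero_nat
    have h2 := h1.const_mul (L / Real.log 2)
    rw [mul_zero] at h2
    refine h2.congr fun n => ?_
    simp only [div_eq_mul_inv, mul_inv_rev, one_mul]
    ring
  obtain ⟨N1, hN1⟩ := (Metric.tendsto_atTop.mp hlim) (ε/4) (by linarith)
  obtain ⟨N2, hN2⟩ := (Metric.tendsto_atTop.mp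
    (tendsto_one_div_atTop_nhds_zero_nat :
      Filter.Tendsto (fun n : ℕ => (1:ℝ)/n) Filter.atTop (nhds 0))) (ε/2) (by linarith)
  refine ⟨max 1 (max N1 N2), fun n hn => ?_⟩
  have hn1 : 1 ≤ n := le_trans (le_max_left _ _) hn
  have hnN1 : N1 ≤ n := le_trans (le_trans (le_max_left _ _) (le_max_right _ _)) hn
  have hnN2 : N2 ≤ n := le_trans (le_trans (le_max_right _ _) (le_max_right _ _)) hn
  have hn0 : (0:ℝ) < n := by exact_mod_cast hn1
  have hl2 : (0:ℝ) < Real.log 2 := Real.log_pos one_lt_two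
  have hc : (0:ℝ) < (n:ℝ)*Real.log 2 := mul_pos hn0 hl2
  have hub : betan ν n q ≤ 1 - q + 1/n := betan_le_aux hν hq0 hq1 hn1
  have hlb1 := log_Snq_ge hν hρmeas hρ0 hρint hρpos hac hq'pos hq'le1 hn1
  have hA' := key_lower hν hρmeas hρ0 hρint hac hq'pos hq'le1 n
  have hI' := Iq_pos hρmeas hρ0 hρint hρpos hq'pos hq'le1
  have hS' : 0 < Snq ν n q' := lt_of_lt_of_le (by positivity) hA'
  have hmono : Snq ν n q' ≤ Snq ν n q := Snq_anti n hqq'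
  have hlb2 : (1/((n:ℝ)*Real.log 2)) * Real.log (Snq ν n q') ≤ betan ν n q := by
    rw [betan_eq]
    exact mul_le_mul_of_nonneg_left (Real.log_le_log hS' hmono) (by positivity)
  have hLb := hN1 n hnN1
  have h1n := hN2 n hnN2
  rw [Real.dist_eq, sub_zero] at hLb h1n
  rw [Real.dist_eq, abs_lt]
  obtain ⟨hLb1, hLb2⟩ := abs_lt.mp hLb
  obtain ⟨h1n1, h1n2⟩ := abs_lt.mp h1n
  constructor
  · have : (1/((n:ℝ)*Real.log 2)) * L + (1 - q') ≤ betan ν n q := le_trans hlb1 hlb2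
    linarith
  · linarith


end
end AuxStmt10

/-- If a probability measure `ν` on `(0,1]` has a nonzero absolutely continuous part
with density `ρ`, then for `q ∈ (0,1)` and every `n ≥ 1`,
`β_n(q) ≥ (1/(n log 2)) log ∫ ρ^q dΛ + 1 - q`; consequently the `L^q`-spectrum exists
as a limit and `β_ν(q) = 1 - q` for all `q ∈ [0,1]`. -/
theorem stmt10 (ν : Measure ℝ) [IsProbabilityMeasure ν] (hν : ν (Set.Ioc 0 1) = 1)
    (ρ : ℝ → ℝ) (hρmeas : Measurable ρ) (hρ0 : ∀ x, 0 ≤ ρ x)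
    (hρint : IntegrableOn ρ (Set.Icc 0 1))
    (hρpos : 0 < ∫ x in Set.Icc (0:ℝ) 1, ρ x)
    (hac : ∀ s : Set ℝ, MeasurableSet s → ENNReal.ofReal (∫ x in s, ρ x) ≤ ν s) :
    (∀ q ∈ Set.Ioo (0:ℝ) 1, ∀ n : ℕ, 1 ≤ n →
      (1 / ((n : ℝ) * Real.log 2)) * Real.log (∫ x in Set.Icc (0:ℝ) 1, (ρ x) ^ q)
        + 1 - q ≤ betan ν n q) ∧
    (∀ q ∈ Set.Icc (0:ℝ) 1,
      Filter.Tendsto (fun n => betan ν n q) Filter.atTop (nhds (1 - q))) ∧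
    (∀ q ∈ Set.Icc (0:ℝ) 1, lqSpectrum ν q = 1 - q) := by
  constructor
  · intro q hq n hn
    have h := log_Snq_ge hν hρmeas hρ0 hρint hρpos hac hq.1 hq.2.le hn
    rw [betan_eq]
    linarith
  constructor
  · intro q hq
    exact tendsto_betan hν hρmeas hρ0 hρint hρpos hac hq.1 hq.2
  · intro q hq
    exact (tendsto_betan hν hρmeas hρ0 hρint hρpos hac hq.1 hq.2).limsup_eq
end
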